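/- arXiv:2401.12550 — 8 statements merged into one kernel-verified Lean document; each statement's English description precedes it below -/
import Mathlib

section
/- ReLU maps unions of polytopes to unions of polytopes (Lemma 2): for any finite index type ι and any family of finite sets V : ι → Set (Fin n → ℝ) with each V i finite, there exist a finite index type κ and a family of finite sets W : κ → Set (Fin n → ℝ) such that the image of ⋃ i, convexHull ℝ (V i) under the ReLU map r equals ⋃ j, convexHull ℝ (W j). -/
open Set Finset

/-- The componentwise ReLU map on `ℝ^n`. -/
noncomputable def relu {n : ℕ} (x : Fin n → ℝ) : Fin n → ℝ :=
  fun i => max (x i) 0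

section Cut
variable {E : Type*} [AddCommGroup E] [Module ℝ E]


noncomputable def cutPt (ℓ : E →ₗ[ℝ] ℝ) (c : ℝ) (a b : E) : E :=
  a + ((c - ℓ a) / (ℓ b - ℓ a)) • (b - a)

lemma cutPt_apply (ℓ : E →ₗ[ℝ] ℝ) (c : ℝ) {a b : E} (hab : ℓ a < ℓ b) :
    ℓ (cutPt ℓ c a b) = c := by
  have h : ℓ b - ℓ a ≠ 0 := by linarith
  simp [cutPt, map_add, map_smul, map_sub, smul_eq_mul]
  field_simp
  ring

lemma cutPt_mem_segment (ℓ : E →ₗ[ℝ] ℝ) (c : ℝ) {a b : E} (ha : ℓ a ≤ c) (hb : c < ℓ b) :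
    cutPt ℓ c a b ∈ segment ℝ a b := by
  have h : (0:ℝ) < ℓ b - ℓ a := by linarith
  have ht0 : 0 ≤ (c - ℓ a) / (ℓ b - ℓ a) := div_nonneg (by linarith) (by linarith)
  have ht1 : (c - ℓ a) / (ℓ b - ℓ a) ≤ 1 := by
    rw [div_le_one h]; linarith
  rw [segment_eq_image']
  exact ⟨_, ⟨ht0, ht1⟩, rfl⟩

omit [AddCommGroup E] [Module ℝ E] in
lemma sum_three_split {M : Type*} [AddCommMonoid M] [DecidableEq E] (U : Finset E) (f : E → M)
    {a b p : E} (haU : a ∈ U) (hbU : b ∈ U) (hpU : p ∈ U)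
    (hab : a ≠ b) (hap : a ≠ p) (hbp : b ≠ p) :
    ∑ v ∈ U, f v = f a + f b + f p + ∑ v ∈ U \ {a, b, p}, f v := by
  have hsub : ({a, b, p} : Finset E) ⊆ U := by
    intro v hv
    simp only [Finset.mem_insert, Finset.mem_singleton] at hv
    rcases hv with rfl | rfl | rfl <;> assumption
  rw [← Finset.sum_sdiff hsub]
  have h1 : ∑ v ∈ ({a, b, p} : Finset E), f v = f a + f b + f p := by
    rw [Finset.sum_insert (by simp [hab, hap]), Finset.sum_insert (by simp [hbp]),
      Finset.sum_singleton, add_assoc]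
  rw [h1]; abel

lemma cut_core (ℓ : E →ₗ[ℝ] ℝ) (c : ℝ) (U W : Finset E)
    (hWU : W ⊆ U)
    (hlow : ∀ v ∈ U, ℓ v ≤ c → v ∈ W)
    (hcut : ∀ a ∈ U, ∀ b ∈ U, ℓ a < c → c < ℓ b → cutPt ℓ c a b ∈ W) :
    ∀ (k : ℕ) (x : E) (w : E → ℝ),
      (∀ v ∈ U, 0 ≤ w v) → (∑ v ∈ U, w v = 1) → (∑ v ∈ U, w v • v = x) →
      ℓ x ≤ c → ((U.filter (fun v => w v ≠ 0 ∧ ℓ v ≠ c)).card ≤ k) →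
      x ∈ convexHull ℝ (W : Set E) := by
  classical
  -- the case where no support point is strictly above the hyperplane
  have base : ∀ (x : E) (w : E → ℝ), (∀ v ∈ U, 0 ≤ w v) → (∑ v ∈ U, w v = 1) →
      (∑ v ∈ U, w v • v = x) → (∀ v ∈ U, w v ≠ 0 → ℓ v ≤ c) →
      x ∈ convexHull ℝ (W : Set E) := by
    intro x w hw0 hw1 hwx hsupp
    set T := U.filter (fun v => w v ≠ 0) with hT
    have hTsum : ∑ v ∈ T, w v = 1 := by rw [hT, Finset.sum_filter_ne_zero]; exact hw1
    have hTx : ∑ v ∈ T, w v • v = x := by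
      rw [← hwx, hT]
      exact Finset.sum_filter_of_ne (fun v _ h hw => h (by rw [hw, zero_smul]))
    have hx : T.centerMass w id = x := by
      rw [Finset.centerMass_eq_of_sum_1 _ _ hTsum]; simpa using hTx
    rw [← hx]
    refine Finset.centerMass_mem_convexHull _ (fun v hv => hw0 v (Finset.mem_of_mem_filter _ hv))
      (by rw [hTsum]; norm_num) (fun v hv => ?_)
    have hv' := Finset.mem_filter.1 hv
    exact Finset.mem_coe.2 (hlow v hv'.1 (hsupp v hv'.1 hv'.2))
  intro k
  induction k with
  | zero =>
    intro x w hw0 hw1 hwx hlx hcard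
    refine base x w hw0 hw1 hwx ?_
    intro v hv hwv
    by_contra h
    push_neg at h
    have hmem : v ∈ U.filter (fun v => w v ≠ 0 ∧ ℓ v ≠ c) :=
      Finset.mem_filter.2 ⟨hv, hwv, by intro he; rw [he] at h; exact lt_irrefl _ h⟩
    have := Finset.card_pos.2 ⟨v, hmem⟩
    omega
  | succ k ih =>
    intro x w hw0 hw1 hwx hlx hcard
    by_cases hb : ∃ b ∈ U, w b ≠ 0 ∧ c < ℓ b
    · obtain ⟨b, hbU, hwb, hlb⟩ := hb
      have hβ : 0 < w b := lt_of_le_of_ne (hw0 b hbU) (Ne.symm hwb)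
      have ha : ∃ a ∈ U, w a ≠ 0 ∧ ℓ a < c := by
        by_contra h
        push_neg at h
        have hx : ℓ x = ∑ v ∈ U, w v * ℓ v := by
          rw [← hwx, map_sum]; simp [map_smul, smul_eq_mul]
        have hlt : c < ∑ v ∈ U, w v * ℓ v := by
          calc c = ∑ v ∈ U, w v * c := by rw [← Finset.sum_mul, hw1, one_mul]
          _ < ∑ v ∈ U, w v * ℓ v := by
            refine Finset.sum_lt_sum (fun v hv => ?_) ⟨b, hbU, ?_⟩
            · rcases eq_or_ne (w v) 0 with h0 | h0
              · simp [h0]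
              · exact mul_le_mul_of_nonneg_left (h v hv h0) (hw0 v hv)
            · exact mul_lt_mul_of_pos_left hlb hβ
        rw [← hx] at hlt; linarith
      obtain ⟨a, haU, hwa, hla⟩ := ha
      have hα : 0 < w a := lt_of_le_of_ne (hw0 a haU) (Ne.symm hwa)
      have hba : ℓ a < ℓ b := lt_trans hla hlb
      set t := (c - ℓ a) / (ℓ b - ℓ a) with htdef
      have hden : (0:ℝ) < ℓ b - ℓ a := by linarith
      have ht0 : 0 < t := div_pos (by linarith) hden
      have ht1 : t < 1 := by rw [htdef, div_lt_one hden]; linarith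
      set p := cutPt ℓ c a b with hpdef
      have hpW : p ∈ W := hcut a haU b hbU hla hlb
      have hpU : p ∈ U := hWU hpW
      have hlp : ℓ p = c := cutPt_apply ℓ c hba
      have hab : a ≠ b := fun h => by rw [h] at hla; linarith
      have hap : a ≠ p := fun h => by rw [h] at hla; linarith [hlp]
      have hbp : b ≠ p := fun h => by rw [h] at hlb; linarith [hlp]
      have hp_comb : p = (1 - t) • a + t • b := by
        rw [hpdef, cutPt, ← htdef]; module
      -- case split: can we eliminate b or a?
      rcases le_or_gt (w b * (1 - t)) (w a * t) with hc1 | hc2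
      · -- eliminate b
        set γ := w b / t with hγdef
        have hγ : 0 < γ := div_pos hβ ht0
        have hβγ : w b = γ * t := by rw [hγdef]; field_simp
        set w' : E → ℝ := fun v =>
          if v = a then w a - γ * (1 - t) else if v = b then 0
          else if v = p then w p + γ else w v with hw'def
        have hw'a : w' a = w a - γ * (1 - t) := by simp [hw'def]
        have hw'b : w' b = 0 := by simp [hw'def, hab.symm]
        have hw'p : w' p = w p + γ := by simp [hw'def, hap.symm, hbp.symm]
        have hw'v : ∀ v, v ≠ a → v ≠ b → v ≠ p → w' v = w v := by
          intro v h1 h2 h3; simp [hw'def, h1, h2, h3]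
        have hw'a0 : 0 ≤ w' a := by
          rw [hw'a, sub_nonneg, hγdef, div_mul_eq_mul_div, div_le_iff₀ ht0]
          linarith
        have htail : ∀ (M : Type) (inst : AddCommMonoid M) (inst2 : Module ℝ M) (g : E → M),
            ∑ v ∈ U \ {a, b, p}, w' v • g v = ∑ v ∈ U \ {a, b, p}, w v • g v := by
          intro M _ _ g
          refine Finset.sum_congr rfl (fun v hv => ?_)
          have hv' := Finset.mem_sdiff.1 hv
          have : v ≠ a ∧ v ≠ b ∧ v ≠ p := by
            have := hv'.2; simp only [Finset.mem_insert, Finset.mem_singleton] at this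
            push_neg at this; exact this
          rw [hw'v v this.1 this.2.1 this.2.2]
        have hsum' : ∑ v ∈ U, w' v = 1 := by
          rw [sum_three_split U w' haU hbU hpU hab hap hbp,
            hw'a, hw'b, hw'p]
          have h2 := sum_three_split U w haU hbU hpU hab hap hbp
          have ht : ∑ v ∈ U \ {a, b, p}, w' v = ∑ v ∈ U \ {a, b, p}, w v := by
            refine Finset.sum_congr rfl (fun v hv => ?_)
            have hv' := Finset.mem_sdiff.1 hv
            have h3 : v ≠ a ∧ v ≠ b ∧ v ≠ p := by
              have := hv'.2; simp only [Finset.mem_insert, Finset.mem_singleton] at this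
              push_neg at this; exact this
            exact hw'v v h3.1 h3.2.1 h3.2.2
          rw [ht]
          rw [h2] at hw1
          rw [hβγ] at hw1
          linarith
        have hx' : ∑ v ∈ U, w' v • v = x := by
          rw [sum_three_split U (fun v => w' v • v) haU hbU hpU hab hap hbp]
          rw [sum_three_split U (fun v => w v • v) haU hbU hpU hab hap hbp] at hwx
          have ht : ∑ v ∈ U \ {a, b, p}, w' v • v = ∑ v ∈ U \ {a, b, p}, w v • v := by
            refine Finset.sum_congr rfl (fun v hv => ?_)
            have hv' := Finset.mem_sdiff.1 hv
            have h3 : v ≠ a ∧ v ≠ b ∧ v ≠ p := by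
              have := hv'.2; simp only [Finset.mem_insert, Finset.mem_singleton] at this
              push_neg at this; exact this
            rw [hw'v v h3.1 h3.2.1 h3.2.2]
          rw [ht, hw'a, hw'b, hw'p, ← hwx, hβγ, hp_comb]
          module
        refine ih x w' (fun v hv => ?_) hsum' hx' hlx ?_
        · rcases eq_or_ne v a with rfl | h1
          · exact hw'a0
          rcases eq_or_ne v b with rfl | h2
          · rw [hw'b]
          rcases eq_or_ne v p with rfl | h3
          · rw [hw'p]; have := hw0 _ hv; linarith
          · rw [hw'v v h1 h2 h3]; exact hw0 v hv
        · have hsub : U.filter (fun v => w' v ≠ 0 ∧ ℓ v ≠ c) ⊆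
              (U.filter (fun v => w v ≠ 0 ∧ ℓ v ≠ c)).erase b := by
            intro v hv
            have hv' := Finset.mem_filter.1 hv
            have hvp : v ≠ p := fun h => hv'.2.2 (h ▸ hlp)
            have hvb : v ≠ b := fun h => hv'.2.1 (h ▸ hw'b)
            refine Finset.mem_erase.2 ⟨hvb, Finset.mem_filter.2 ⟨hv'.1, ?_, hv'.2.2⟩⟩
            rcases eq_or_ne v a with rfl | h1
            · exact hwa
            · rw [← hw'v v h1 hvb hvp]; exact hv'.2.1
          have hbmem : b ∈ U.filter (fun v => w v ≠ 0 ∧ ℓ v ≠ c) :=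
            Finset.mem_filter.2 ⟨hbU, hwb, fun h => by rw [h] at hlb; exact lt_irrefl _ hlb⟩
          have := Finset.card_le_card hsub
          rw [Finset.card_erase_of_mem hbmem] at this
          omega
      · -- eliminate a
        set δ := w a / (1 - t) with hδdef
        have h1t : (0:ℝ) < 1 - t := by linarith
        have hδ : 0 < δ := div_pos hα h1t
        have hαδ : w a = δ * (1 - t) := by rw [hδdef]; field_simp
        set w' : E → ℝ := fun v =>
          if v = a then 0 else if v = b then w b - δ * t
          else if v = p then w p + δ else w v with hw'def
        have hw'a : w' a = 0 := by simp [hw'def]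
        have hw'b : w' b = w b - δ * t := by simp [hw'def, hab.symm]
        have hw'p : w' p = w p + δ := by simp [hw'def, hap.symm, hbp.symm]
        have hw'v : ∀ v, v ≠ a → v ≠ b → v ≠ p → w' v = w v := by
          intro v h1 h2 h3; simp [hw'def, h1, h2, h3]
        have hw'b0 : 0 ≤ w' b := by
          rw [hw'b, sub_nonneg, hδdef, div_mul_eq_mul_div, div_le_iff₀ h1t]
          nlinarith
        have hsum' : ∑ v ∈ U, w' v = 1 := by
          rw [sum_three_split U w' haU hbU hpU hab hap hbp, hw'a, hw'b, hw'p]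
          rw [sum_three_split U w haU hbU hpU hab hap hbp] at hw1
          have ht : ∑ v ∈ U \ {a, b, p}, w' v = ∑ v ∈ U \ {a, b, p}, w v := by
            refine Finset.sum_congr rfl (fun v hv => ?_)
            have hv' := Finset.mem_sdiff.1 hv
            have h3 : v ≠ a ∧ v ≠ b ∧ v ≠ p := by
              have := hv'.2; simp only [Finset.mem_insert, Finset.mem_singleton] at this
              push_neg at this; exact this
            exact hw'v v h3.1 h3.2.1 h3.2.2
          rw [ht]
          rw [hαδ] at hw1
          linarith
        have hx' : ∑ v ∈ U, w' v • v = x := by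
          rw [sum_three_split U (fun v => w' v • v) haU hbU hpU hab hap hbp]
          rw [sum_three_split U (fun v => w v • v) haU hbU hpU hab hap hbp] at hwx
          have ht : ∑ v ∈ U \ {a, b, p}, w' v • v = ∑ v ∈ U \ {a, b, p}, w v • v := by
            refine Finset.sum_congr rfl (fun v hv => ?_)
            have hv' := Finset.mem_sdiff.1 hv
            have h3 : v ≠ a ∧ v ≠ b ∧ v ≠ p := by
              have := hv'.2; simp only [Finset.mem_insert, Finset.mem_singleton] at this
              push_neg at this; exact this
            rw [hw'v v h3.1 h3.2.1 h3.2.2]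
          rw [ht, hw'a, hw'b, hw'p, ← hwx, hαδ, hp_comb]
          module
        refine ih x w' (fun v hv => ?_) hsum' hx' hlx ?_
        · rcases eq_or_ne v a with rfl | h1
          · rw [hw'a]
          rcases eq_or_ne v b with rfl | h2
          · exact hw'b0
          rcases eq_or_ne v p with rfl | h3
          · rw [hw'p]; have := hw0 _ hv; linarith
          · rw [hw'v v h1 h2 h3]; exact hw0 v hv
        · have hsub : U.filter (fun v => w' v ≠ 0 ∧ ℓ v ≠ c) ⊆
              (U.filter (fun v => w v ≠ 0 ∧ ℓ v ≠ c)).erase a := by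
            intro v hv
            have hv' := Finset.mem_filter.1 hv
            have hvp : v ≠ p := fun h => hv'.2.2 (h ▸ hlp)
            have hva : v ≠ a := fun h => hv'.2.1 (h ▸ hw'a)
            refine Finset.mem_erase.2 ⟨hva, Finset.mem_filter.2 ⟨hv'.1, ?_, hv'.2.2⟩⟩
            rcases eq_or_ne v b with rfl | h2
            · exact hwb
            · rw [← hw'v v hva h2 hvp]; exact hv'.2.1
          have hamem : a ∈ U.filter (fun v => w v ≠ 0 ∧ ℓ v ≠ c) :=
            Finset.mem_filter.2 ⟨haU, hwa, fun h => by rw [h] at hla; exact lt_irrefl _ hla⟩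
          have := Finset.card_le_card hsub
          rw [Finset.card_erase_of_mem hamem] at this
          omega
    · push_neg at hb
      exact base x w hw0 hw1 hwx hb

/-- A polytope intersected with a halfspace is a polytope. -/
lemma polytope_inter_halfspace (ℓ : E →ₗ[ℝ] ℝ) (c : ℝ) (V : Set E) (hV : V.Finite) :
    ∃ W : Set E, W.Finite ∧ convexHull ℝ V ∩ {x | ℓ x ≤ c} = convexHull ℝ W := by
  classical
  set Vf := hV.toFinset with hVf
  have hVc : (Vf : Set E) = V := hV.coe_toFinset
  set A : Finset E := Vf.filter (fun v => ℓ v ≤ c) with hA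
  set P : Finset E :=
    ((Vf ×ˢ Vf).filter (fun q => ℓ q.1 < c ∧ c < ℓ q.2)).image (fun q => cutPt ℓ c q.1 q.2)
    with hP
  set W : Finset E := A ∪ P with hW
  set U : Finset E := Vf ∪ W with hU
  refine ⟨(W : Set E), W.finite_toSet, Subset.antisymm ?_ ?_⟩
  · -- hard direction
    rintro x ⟨hx, hlx⟩
    rw [← hVc, Finset.convexHull_eq] at hx
    obtain ⟨w, hw0, hw1, hwx⟩ := hx
    set w' : E → ℝ := fun v => if v ∈ Vf then w v else 0 with hw'
    have hVU : Vf ⊆ U := Finset.subset_union_left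
    have hw'1 : ∑ v ∈ U, w' v = 1 := by
      rw [← Finset.sum_subset hVU (fun v _ hv => by simp [hw', hv])]
      rw [← hw1]
      exact Finset.sum_congr rfl (fun v hv => by simp [hw', hv])
    have hw'x : ∑ v ∈ U, w' v • v = x := by
      rw [← Finset.sum_subset hVU (fun v _ hv => by simp [hw', hv])]
      rw [Finset.centerMass_eq_of_sum_1 _ _ hw1] at hwx
      rw [← hwx]
      exact Finset.sum_congr rfl (fun v hv => by simp [hw', hv])
    refine cut_core ℓ c U W Finset.subset_union_right ?_ ?_ U.card x w'
      (fun v hv => by by_cases h : v ∈ Vf <;> simp [hw', h, hw0 v] ) hw'1 hw'x hlx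
      (Finset.card_filter_le _ _)
    · -- hlow
      intro v hv hvc
      rcases Finset.mem_union.1 hv with h | h
      · exact Finset.mem_union.2 (Or.inl (Finset.mem_filter.2 ⟨h, hvc⟩))
      · exact h
    · -- hcut
      intro a haU b hbU hla hlb
      have haV : a ∈ Vf := by
        rcases Finset.mem_union.1 haU with h | h
        · exact h
        rcases Finset.mem_union.1 h with h | h
        · exact Finset.mem_of_mem_filter _ h
        · exfalso
          obtain ⟨q, hq, rfl⟩ := Finset.mem_image.1 h
          have hq' := (Finset.mem_filter.1 hq).2
          have := cutPt_apply ℓ c (lt_trans hq'.1 hq'.2)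
          rw [this] at hla; exact lt_irrefl _ hla
      have hbV : b ∈ Vf := by
        rcases Finset.mem_union.1 hbU with h | h
        · exact h
        exfalso
        rcases Finset.mem_union.1 h with h | h
        · have := (Finset.mem_filter.1 h).2; linarith
        · obtain ⟨q, hq, rfl⟩ := Finset.mem_image.1 h
          have hq' := (Finset.mem_filter.1 hq).2
          have := cutPt_apply ℓ c (lt_trans hq'.1 hq'.2)
          rw [this] at hlb; exact lt_irrefl _ hlb
      refine Finset.mem_union.2 (Or.inr (Finset.mem_image.2 ⟨(a, b), ?_, rfl⟩))
      exact Finset.mem_filter.2 ⟨Finset.mem_product.2 ⟨haV, hbV⟩, hla, hlb⟩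
  · -- easy direction
    refine convexHull_min ?_ ((convex_convexHull ℝ V).inter (convex_halfSpace_le ℓ.isLinear c))
    intro v hv
    rcases Finset.mem_union.1 hv with h | h
    · have h' := Finset.mem_filter.1 h
      refine ⟨subset_convexHull ℝ V ?_, h'.2⟩
      rw [← hVc]; exact Finset.mem_coe.2 h'.1
    · obtain ⟨q, hq, rfl⟩ := Finset.mem_image.1 h
      have hq' := Finset.mem_filter.1 hq
      have hqm := Finset.mem_product.1 hq'.1
      have hseg := cutPt_mem_segment ℓ c (le_of_lt hq'.2.1) hq'.2.2
      constructor
      · refine segment_subset_convexHull ?_ ?_ hseg <;> rw [← hVc]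
        · exact Finset.mem_coe.2 hqm.1
        · exact Finset.mem_coe.2 hqm.2
      · exact le_of_eq (cutPt_apply ℓ c (lt_trans hq'.2.1 hq'.2.2))

end Cut

noncomputable def reluCoord {n : ℕ} (i : Fin n) (x : Fin n → ℝ) : Fin n → ℝ :=
  Function.update x i (max (x i) 0)

/-- the linear map that zeroes out coordinate `i` -/
noncomputable def projCoord {n : ℕ} (i : Fin n) : (Fin n → ℝ) →ₗ[ℝ] (Fin n → ℝ) :=
  LinearMap.pi (fun j => if j = i then 0 else LinearMap.proj j)

lemma projCoord_apply {n : ℕ} (i : Fin n) (x : Fin n → ℝ) (j : Fin n) :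
    projCoord i x j = if j = i then 0 else x j := by
  simp only [projCoord, LinearMap.pi_apply]
  split_ifs <;> simp

/-- `S` is a finite union of polytopes. -/
def IsFUP {E : Type*} [AddCommGroup E] [Module ℝ E] (S : Set E) : Prop :=
  ∃ F : Set (Set E), F.Finite ∧ (∀ P ∈ F, ∃ V : Set E, V.Finite ∧ P = convexHull ℝ V) ∧
    S = ⋃₀ F

section FUP
variable {E : Type*} [AddCommGroup E] [Module ℝ E]

lemma isFUP_polytope {V : Set E} (hV : V.Finite) : IsFUP (convexHull ℝ V) :=
  ⟨{convexHull ℝ V}, Set.finite_singleton _,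
    fun P hP => ⟨V, hV, hP⟩, by simp⟩

lemma isFUP_iUnion {ι : Type*} [Finite ι] (S : ι → Set E) (h : ∀ i, IsFUP (S i)) :
    IsFUP (⋃ i, S i) := by
  choose F hFfin hFpoly hFeq using h
  refine ⟨⋃ i, F i, Set.finite_iUnion hFfin, ?_, ?_⟩
  · rintro P hP
    obtain ⟨i, hi⟩ := Set.mem_iUnion.1 hP
    exact hFpoly i P hi
  · rw [Set.sUnion_iUnion]
    exact iUnion_congr hFeq

lemma isFUP_union {S T : Set E} (hS : IsFUP S) (hT : IsFUP T) : IsFUP (S ∪ T) := by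
  rw [Set.union_eq_iUnion]
  exact isFUP_iUnion _ (fun b => by cases b <;> simpa)
end FUP

lemma reluCoord_image {n : ℕ} (i : Fin n) (P : Set (Fin n → ℝ)) :
    reluCoord i '' P = (P ∩ {x | 0 ≤ x i}) ∪ (projCoord i '' (P ∩ {x | x i ≤ 0})) := by
  have hid : ∀ x : Fin n → ℝ, 0 ≤ x i → reluCoord i x = x := by
    intro x hx
    rw [reluCoord, max_eq_left hx, Function.update_eq_self]
  have hproj : ∀ x : Fin n → ℝ, x i ≤ 0 → reluCoord i x = projCoord i x := by
    intro x hx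
    funext j
    rw [projCoord_apply]
    rcases eq_or_ne j i with rfl | h
    · simp [reluCoord, max_eq_right hx]
    · simp [reluCoord, Function.update_of_ne h, h]
  ext y
  constructor
  · rintro ⟨x, hx, rfl⟩
    rcases le_total 0 (x i) with h | h
    · exact Or.inl ⟨by rwa [hid x h], by rw [hid x h]; exact h⟩
    · exact Or.inr ⟨x, ⟨hx, h⟩, (hproj x h).symm⟩
  · rintro (⟨hy, hyi⟩ | ⟨x, ⟨hx, hxi⟩, rfl⟩)
    · exact ⟨y, hy, hid y hyi⟩
    · exact ⟨x, hx, hproj x hxi⟩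

lemma isFUP_reluCoord_image_polytope {n : ℕ} (i : Fin n) {V : Set (Fin n → ℝ)} (hV : V.Finite) :
    IsFUP (reluCoord i '' (convexHull ℝ V)) := by
  rw [reluCoord_image]
  refine isFUP_union ?_ ?_
  · obtain ⟨W, hWfin, hWeq⟩ := polytope_inter_halfspace (-(LinearMap.proj i)) 0 V hV
    have : convexHull ℝ V ∩ {x | 0 ≤ x i} = convexHull ℝ W := by
      rw [← hWeq]
      congr 1
      ext x
      simp [neg_le, LinearMap.proj_apply, neg_nonpos]
    rw [this]
    exact isFUP_polytope hWfin
  · obtain ⟨W, hWfin, hWeq⟩ := polytope_inter_halfspace (LinearMap.proj i) 0 V hV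
    have : convexHull ℝ V ∩ {x | x i ≤ 0} = convexHull ℝ W := by
      rw [← hWeq]; rfl
    rw [this, LinearMap.image_convexHull]
    exact isFUP_polytope (hWfin.image _)

lemma isFUP_reluCoord_image {n : ℕ} (i : Fin n) {S : Set (Fin n → ℝ)} (hS : IsFUP S) :
    IsFUP (reluCoord i '' S) := by
  obtain ⟨F, hFfin, hFpoly, rfl⟩ := hS
  rw [Set.sUnion_eq_iUnion, Set.image_iUnion]
  have : Finite ↥F := hFfin.to_subtype
  refine isFUP_iUnion _ (fun P => ?_)
  obtain ⟨V, hVfin, hVeq⟩ := hFpoly P.1 P.2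
  rw [hVeq]
  exact isFUP_reluCoord_image_polytope i hVfin

lemma relu_eq_foldr {n : ℕ} (x : Fin n → ℝ) :
    relu x = (List.finRange n).foldr (fun i y => reluCoord i y) x := by
  have key : ∀ (L : List (Fin n)) (x : Fin n → ℝ) (j : Fin n),
      (L.foldr (fun i y => reluCoord i y) x) j = if j ∈ L then max (x j) 0 else x j := by
    intro L
    induction L with
    | nil => intro x j; simp
    | cons i L ih =>
      intro x j
      simp only [List.foldr_cons]
      rcases eq_or_ne j i with rfl | h
      · rw [reluCoord, Function.update_self, ih, if_pos (List.mem_cons_self (a := j) (l := L))]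
        by_cases h' : j ∈ L
        · rw [if_pos h']
          simp [max_assoc]
        · rw [if_neg h']
      · rw [reluCoord, Function.update_of_ne h, ih]
        simp [List.mem_cons, h]
  funext j
  rw [key, if_pos (List.mem_finRange j)]
  rfl

lemma isFUP_foldr_image {n : ℕ} (L : List (Fin n)) {S : Set (Fin n → ℝ)} (hS : IsFUP S) :
    IsFUP ((fun x => L.foldr (fun i y => reluCoord i y) x) '' S) := by
  induction L generalizing S with
  | nil => simpa using hS
  | cons i L ih =>
    have h : (fun x => (i :: L).foldr (fun i y => reluCoord i y) x) =
        reluCoord i ∘ (fun x => L.foldr (fun i y => reluCoord i y) x) := rfl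
    rw [h, Set.image_comp]
    exact isFUP_reluCoord_image i (ih hS)

lemma isFUP_relu_image {n : ℕ} {S : Set (Fin n → ℝ)} (hS : IsFUP S) :
    IsFUP (relu '' S) := by
  have h : relu '' S = (fun x => (List.finRange n).foldr (fun i y => reluCoord i y) x) '' S :=
    Set.image_congr (fun x _ => relu_eq_foldr x)
  rw [h]
  exact isFUP_foldr_image _ hS


/-- ReLU maps unions of polytopes to unions of polytopes. -/
theorem relu_image_iUnion_polytopes {n : ℕ} (ι : Type) [Fintype ι]
    (V : ι → Set (Fin n → ℝ)) (hV : ∀ i, (V i).Finite) :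
    ∃ (κ : Type) (_ : Fintype κ) (W : κ → Set (Fin n → ℝ)),
      (∀ j, (W j).Finite) ∧
      relu '' (⋃ i, convexHull ℝ (V i)) = ⋃ j, convexHull ℝ (W j) := by
  have hFUP : IsFUP (relu '' (⋃ i, convexHull ℝ (V i))) :=
    isFUP_relu_image (isFUP_iUnion _ (fun i => isFUP_polytope (hV i)))
  obtain ⟨F, hFfin, hFpoly, hFeq⟩ := hFUP
  refine ⟨↥F, hFfin.fintype, fun P => (hFpoly P.1 P.2).choose,
    fun P => (hFpoly P.1 P.2).choose_spec.1, ?_⟩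
  rw [hFeq, Set.sUnion_eq_iUnion]
  exact Set.iUnion_congr (fun P => (hFpoly P.1 P.2).choose_spec.2)
end

section
/- The ReLU image of a single polytope is a union of at most 2^n polytopes: for any finite set V ⊆ (Fin n → ℝ) there exists a family of finite sets W : (Fin n → Bool) → Set (Fin n → ℝ), each W s finite (possibly empty), such that the image of convexHull ℝ V under the ReLU map r equals ⋃ s, convexHull ℝ (W s). -/
open Finset

lemma halfspace_lemma {E : Type*} [AddCommGroup E] [Module ℝ E]
    (f : E →ₗ[ℝ] ℝ) (V : Finset E) :
    ∃ W : Finset E,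
      convexHull ℝ (W : Set E) = convexHull ℝ (V : Set E) ∩ {x | 0 ≤ f x} := by
  classical
  set Vp := V.filter (fun v => 0 ≤ f v) with hVp
  set Vm := V.filter (fun v => ¬ 0 ≤ f v) with hVm
  have hVpf : ∀ v ∈ Vp, 0 ≤ f v := fun v hv => (mem_filter.1 hv).2
  have hVmf : ∀ u ∈ Vm, f u < 0 := fun u hu => lt_of_not_ge (mem_filter.1 hu).2
  set wpt : E × E → E := fun p => (f p.2 - f p.1)⁻¹ • (f p.2 • p.1 - f p.1 • p.2) with hwpt
  set W := Vp ∪ (Vm ×ˢ Vp).image wpt with hW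
  have hd : ∀ u ∈ Vm, ∀ v ∈ Vp, 0 < f v - f u := fun u hu v hv =>
    sub_pos.2 (lt_of_lt_of_le (hVmf u hu) (hVpf v hv))
  -- each wpt lies in the segment and on the hyperplane
  have hseg : ∀ u ∈ Vm, ∀ v ∈ Vp, wpt (u, v) ∈ segment ℝ u v := by
    intro u hu v hv
    have hduv := hd u hu v hv
    refine ⟨f v / (f v - f u), (-(f u)) / (f v - f u), div_nonneg (hVpf v hv) hduv.le,
      div_nonneg (neg_nonneg.2 (hVmf u hu).le) hduv.le, by field_simp; ring, ?_⟩
    simp only [hwpt, div_eq_inv_mul]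
    module
  have hzero : ∀ u ∈ Vm, ∀ v ∈ Vp, f (wpt (u, v)) = 0 := by
    intro u hu v hv
    simp only [hwpt, map_smul, map_sub, smul_eq_mul]
    ring
  refine ⟨W, le_antisymm ?_ ?_⟩
  · -- convexHull W ⊆ RHS
    apply convexHull_min
    · intro w hw
      simp only [hW, coe_union, Set.mem_union, coe_image, Set.mem_image, mem_coe] at hw
      rcases hw with hw | ⟨p, hp, rfl⟩
      · exact ⟨subset_convexHull ℝ _ (filter_subset _ V hw), hVpf w hw⟩
      · rcases mem_product.1 hp with ⟨h1, h2⟩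
        constructor
        · exact convex_convexHull ℝ _ |>.segment_subset
            (subset_convexHull ℝ _ (filter_subset _ V h1))
            (subset_convexHull ℝ _ (filter_subset _ V h2)) (hseg _ h1 _ h2)
        · exact le_of_eq (hzero _ h1 _ h2).symm
    · exact (convex_convexHull ℝ _).inter (convex_halfSpace_ge (LinearMap.isLinear f) 0)
  · -- RHS ⊆ convexHull W
    rintro x ⟨hx, hfx⟩
    rw [Finset.convexHull_eq] at hx
    obtain ⟨w, hw0, hw1, hwx⟩ := hx
    rw [Finset.centerMass_eq_of_sum_1 _ _ hw1] at hwx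
    simp only [id] at hwx
    have hsplitR : ∀ g : E → ℝ, ∑ v ∈ V, g v = ∑ v ∈ Vp, g v + ∑ v ∈ Vm, g v := by
      intro g
      rw [hVm, hVp, Finset.sum_filter_add_sum_filter_not V (fun v => 0 ≤ f v) g]
    have hsplit : ∀ g : E → E, ∑ v ∈ V, g v = ∑ v ∈ Vp, g v + ∑ v ∈ Vm, g v := by
      intro g
      rw [hVm, hVp, Finset.sum_filter_add_sum_filter_not V (fun v => 0 ≤ f v) g]
    set A := ∑ v ∈ Vp, w v * f v with hA
    set B := ∑ u ∈ Vm, w u * (-(f u)) with hB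
    set M := ∑ u ∈ Vm, w u with hM
    set L := ∑ v ∈ Vp, w v with hL
    have hML : L + M = 1 := by rw [hL, hM, ← hsplitR w, hw1]
    have hA0 : 0 ≤ A := Finset.sum_nonneg fun v hv =>
      mul_nonneg (hw0 v (filter_subset _ V hv)) (hVpf v hv)
    have hfx' : f x = A - B := by
      have : f x = ∑ v ∈ V, w v * f v := by
        rw [← hwx, map_sum]; simp
      rw [this, hsplitR (fun v => w v * f v), hA, hB]
      rw [sub_eq_add_neg, ← Finset.sum_neg_distrib]
      congr 1
      exact Finset.sum_congr rfl fun u hu => by ring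
    by_cases h0 : ∀ u ∈ Vm, w u = 0
    · -- x is a convex combination of Vp alone
      have hx1 : ∑ v ∈ Vp, w v = 1 := by
        rw [← hw1, hsplitR w, Finset.sum_eq_zero h0, add_zero]
      have hxx : Vp.centerMass w id = x := by
        have hzm : ∑ u ∈ Vm, w u • u = 0 :=
          Finset.sum_eq_zero fun u hu => by rw [h0 u hu, zero_smul]
        rw [Finset.centerMass_eq_of_sum_1 _ _ hx1, ← hwx, hsplit (fun v => w v • v), hzm, add_zero]
        simp
      rw [← hxx]
      exact Finset.centerMass_mem_convexHull _ (fun v hv => hw0 v (filter_subset _ V hv))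
        (hx1 ▸ one_pos) (fun v hv => Set.mem_of_mem_of_subset (mem_coe.2 hv)
          (by rw [hW]; exact_mod_cast coe_subset.2 (subset_union_left)))
    · push_neg at h0
      obtain ⟨u₀, hu₀, hwu₀⟩ := h0
      have hBpos : 0 < B := by
        apply Finset.sum_pos' (fun u hu => mul_nonneg (hw0 u (filter_subset _ V hu))
          (neg_nonneg.2 (hVmf u hu).le))
        exact ⟨u₀, hu₀, mul_pos (lt_of_le_of_ne (hw0 u₀ (filter_subset _ V hu₀)) (Ne.symm hwu₀))
          (neg_pos.2 (hVmf u₀ hu₀))⟩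
      have hAB : B ≤ A := by
        have := hfx
        rw [Set.mem_setOf_eq, hfx', sub_nonneg] at this
        exact this
      have hApos : 0 < A := lt_of_lt_of_le hBpos hAB
      have hAne : A ≠ 0 := hApos.ne'
      -- the big convex combination
      set t : Finset ((E × E) ⊕ E) := (Vm ×ˢ Vp).disjSum Vp with ht
      set ω : (E × E) ⊕ E → ℝ := Sum.elim (fun p => w p.1 * w p.2 * (f p.2 - f p.1) / A)
        (fun v => w v * (1 - B / A)) with hω
      set z : (E × E) ⊕ E → E := Sum.elim wpt id with hz
      have hω0 : ∀ i ∈ t, 0 ≤ ω i := by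
        rintro (p | v) hi
        · rcases mem_product.1 (Finset.inl_mem_disjSum.1 hi) with ⟨h1, h2⟩
          exact div_nonneg (mul_nonneg (mul_nonneg (hw0 _ (filter_subset _ V h1))
            (hw0 _ (filter_subset _ V h2))) (hd _ h1 _ h2).le) hA0
        · have hv := Finset.inr_mem_disjSum.1 hi
          exact mul_nonneg (hw0 _ (filter_subset _ V hv))
            (by rw [sub_nonneg]; exact (div_le_one hApos).2 hAB)
      have hω1 : ∑ i ∈ t, ω i = 1 := by
        rw [ht, hω, Finset.sum_disjSum]; simp only [Sum.elim_inl, Sum.elim_inr]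
        have e1 : ∑ p ∈ Vm ×ˢ Vp, w p.1 * w p.2 * (f p.2 - f p.1) / A = (M * A + B * L) / A := by
          rw [← Finset.sum_div]
          congr 1
          rw [Finset.sum_product]
          have inner : ∀ u ∈ Vm, ∑ v ∈ Vp, w u * w v * (f v - f u)
              = w u * A + (w u * -f u) * L := by
            intro u hu
            rw [hA, hL, Finset.mul_sum, Finset.mul_sum, ← Finset.sum_add_distrib]
            exact Finset.sum_congr rfl fun v hv => by ring
          rw [Finset.sum_congr rfl inner, Finset.sum_add_distrib, ← Finset.sum_mul,
            ← Finset.sum_mul, ← hM, ← hB]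
        have e2 : ∑ v ∈ Vp, w v * (1 - B / A) = L * (1 - B / A) := by
          rw [hL, Finset.sum_mul]
        rw [e1, e2]
        have : (M * A + B * L) / A + L * (1 - B / A) = M + L := by field_simp; ring
        rw [this, add_comm]
        exact hML
      have hsum : ∑ i ∈ t, ω i • z i = x := by
        rw [ht, hω, hz]
        rw [show (∑ i ∈ ((Vm ×ˢ Vp).disjSum Vp),
          (Sum.elim (fun p => w p.1 * w p.2 * (f p.2 - f p.1) / A)
            (fun v => w v * (1 - B / A)) i) • (Sum.elim wpt id i))
          = ∑ i ∈ ((Vm ×ˢ Vp).disjSum Vp),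
            (Sum.elim (fun p => (w p.1 * w p.2 * (f p.2 - f p.1) / A) • wpt p)
              (fun v => (w v * (1 - B / A)) • v) i) from
          Finset.sum_congr rfl (by rintro (p | v) hi <;> simp)]
        rw [Finset.sum_disjSum]; simp only [Sum.elim_inl, Sum.elim_inr]
        have hpair : ∀ p ∈ Vm ×ˢ Vp, (w p.1 * w p.2 * (f p.2 - f p.1) / A) • wpt p
            = (w p.1 * (w p.2 * f p.2) / A) • p.1 + ((w p.1 * -f p.1) * w p.2 / A) • p.2 := by
          rintro ⟨u, v⟩ hp
          rcases mem_product.1 hp with ⟨h1, h2⟩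
          have hdne : f v - f u ≠ 0 := (hd u h1 v h2).ne'
          simp only [hwpt]
          match_scalars
          · field_simp
          · field_simp
        rw [Finset.sum_congr rfl hpair, Finset.sum_add_distrib]
        have p1 : ∑ p ∈ Vm ×ˢ Vp, (w p.1 * (w p.2 * f p.2) / A) • p.1 = ∑ u ∈ Vm, w u • u := by
          rw [Finset.sum_product]
          refine Finset.sum_congr rfl fun u hu => ?_
          rw [← Finset.sum_smul]
          congr 1
          rw [← Finset.sum_div]
          show (∑ i ∈ Vp, w u * (w i * f i)) / A = w u
          rw [← Finset.mul_sum, ← hA, mul_div_assoc, div_self hAne, mul_one]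
        have p2 : ∑ p ∈ Vm ×ˢ Vp, ((w p.1 * -f p.1) * w p.2 / A) • p.2
            = ∑ v ∈ Vp, (w v * B / A) • v := by
          rw [Finset.sum_product, Finset.sum_comm]
          refine Finset.sum_congr rfl fun v hv => ?_
          rw [← Finset.sum_smul]
          congr 1
          rw [← Finset.sum_div]
          show (∑ i ∈ Vm, w i * -f i * w v) / A = w v * B / A
          rw [← Finset.sum_mul, ← hB]
          ring
        rw [p1, p2, add_assoc, ← Finset.sum_add_distrib]
        have p3 : ∀ v, (w v * B / A) • v + (w v * (1 - B / A)) • v = w v • v := by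
          intro v
          rw [← add_smul]
          congr 1
          ring
        rw [Finset.sum_congr rfl (fun v _ => p3 v), add_comm, ← hsplit (fun v => w v • v), hwx]
      have hxc : t.centerMass ω z = x := by
        rw [Finset.centerMass_eq_of_sum_1 _ _ hω1, hsum]
      rw [← hxc]
      apply Finset.centerMass_mem_convexHull _ hω0 (hω1 ▸ one_pos)
      rintro (p | v) hi
      · simp only [hz, Sum.elim_inl]
        exact Finset.mem_coe.2 (Finset.mem_union_right _
          (Finset.mem_image_of_mem wpt (Finset.inl_mem_disjSum.1 hi)))
      · simp only [hz, Sum.elim_inr, id]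
        exact Finset.mem_coe.2 (Finset.mem_union_left _ (Finset.inr_mem_disjSum.1 hi))

lemma halfspaces_lemma {E : Type*} [AddCommGroup E] [Module ℝ E] {ι : Type*}
    (g : ι → E →ₗ[ℝ] ℝ) (F : Finset ι) (V : Finset E) :
    ∃ W : Finset E,
      convexHull ℝ (W : Set E) = convexHull ℝ (V : Set E) ∩ {x | ∀ i ∈ F, 0 ≤ g i x} := by
  classical
  induction F using Finset.induction_on with
  | empty => exact ⟨V, by simp⟩
  | insert a F ha IH =>
    obtain ⟨W, hWeq⟩ := IH
    obtain ⟨W', hW'⟩ := halfspace_lemma (g a) W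
    refine ⟨W', ?_⟩
    rw [hW', hWeq, Set.inter_assoc]
    congr 1
    ext x
    simp only [Set.mem_inter_iff, Set.mem_setOf_eq, Finset.forall_mem_insert]
    tauto

/-- The ReLU image of a single polytope is a union of at most `2^n` polytopes,
indexed by sign patterns `Fin n → Bool`. -/
theorem relu_image_polytope_union {n : ℕ} (V : Set (Fin n → ℝ)) (hV : V.Finite) :
    ∃ W : (Fin n → Bool) → Set (Fin n → ℝ),
      (∀ s, (W s).Finite) ∧
      relu '' (convexHull ℝ V) = ⋃ s, convexHull ℝ (W s) := by
  classical
  set Vf := hV.toFinset with hVfdef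
  have hVf : (Vf : Set (Fin n → ℝ)) = V := hV.coe_toFinset
  set g : (Fin n → Bool) → Fin n → ((Fin n → ℝ) →ₗ[ℝ] ℝ) := fun s i =>
    if s i then LinearMap.proj i else -LinearMap.proj i with hg
  set L : (Fin n → Bool) → ((Fin n → ℝ) →ₗ[ℝ] (Fin n → ℝ)) := fun s =>
    LinearMap.pi (fun i => if s i then LinearMap.proj i else 0) with hL
  choose Ws hWs using fun s => halfspaces_lemma (g s) Finset.univ Vf
  refine ⟨fun s => (L s) '' (Ws s : Set (Fin n → ℝ)),
    fun s => ((Ws s).finite_toSet).image _, ?_⟩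
  have key : ∀ s, convexHull ℝ ((L s) '' (Ws s : Set (Fin n → ℝ)))
      = (L s) '' (convexHull ℝ V ∩ {x | ∀ i, 0 ≤ g s i x}) := by
    intro s
    rw [← (L s).image_convexHull, hWs s, hVf]
    ext x
    simp
  have hLrelu : ∀ (s : Fin n → Bool) (x : Fin n → ℝ), (∀ i, 0 ≤ g s i x) →
      L s x = relu x := by
    intro s x hx
    funext i
    have hxi := hx i
    by_cases h : s i
    · simp only [hg, h, if_true, LinearMap.proj_apply] at hxi
      simp only [hL, LinearMap.pi_apply, h, if_true, LinearMap.proj_apply, relu]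
      exact (max_eq_left hxi).symm
    · simp only [hg, if_neg h, LinearMap.neg_apply, LinearMap.proj_apply,
        neg_nonneg] at hxi
      simp only [hL, LinearMap.pi_apply, if_neg h, LinearMap.zero_apply, relu]
      exact (max_eq_right hxi).symm
  ext y
  constructor
  · rintro ⟨x, hx, rfl⟩
    refine Set.mem_iUnion.2 ⟨fun i => decide (0 ≤ x i), ?_⟩
    rw [key]
    have hxs : ∀ i, 0 ≤ g (fun i => decide (0 ≤ x i)) i x := by
      intro i
      by_cases h : 0 ≤ x i
      · simp [hg, h]
      · have hfalse : decide (0 ≤ x i) = false := decide_eq_false h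
        simp only [hg, hfalse, Bool.false_eq_true, if_false, LinearMap.neg_apply,
          LinearMap.proj_apply, neg_nonneg]
        exact (lt_of_not_ge h).le
    exact ⟨x, ⟨hx, hxs⟩, hLrelu _ x hxs⟩
  · intro hy
    obtain ⟨s, hy⟩ := Set.mem_iUnion.1 hy
    rw [key] at hy
    obtain ⟨x, ⟨hx, hxs⟩, rfl⟩ := hy
    exact ⟨x, hx, (hLrelu s x hxs).symm⟩
end

section
/- Cross-section of a polytope by a coordinate hyperplane: for every finite set V ⊆ (Fin n → ℝ) and every index d : Fin n, (convexHull ℝ V) ∩ {x | x d = 0} = convexHull ℝ ({v ∈ V | v d = 0} ∪ I_d(V)). -/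
open Finset

lemma sum_filter_trichotomy {M : Type*} [AddCommMonoid M] {α : Type*}
    (F : Finset α) (g : α → ℝ) (f : α → M) :
    ∑ y ∈ F, f y =
      ∑ y ∈ F.filter (fun y => 0 < g y), f y +
      ∑ y ∈ F.filter (fun y => g y < 0), f y +
      ∑ y ∈ F.filter (fun y => g y = 0), f y := by
  classical
  rw [← Finset.sum_filter_add_sum_filter_not F (fun y => 0 < g y) f,
    ← Finset.sum_filter_add_sum_filter_not (F.filter (fun y => ¬ 0 < g y))
      (fun y => g y < 0) f, Finset.filter_filter, Finset.filter_filter, add_assoc]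
  congr 2
  · apply Finset.sum_congr _ (fun _ _ => rfl)
    apply Finset.filter_congr
    intro y _
    constructor
    · exact fun h => h.2
    · exact fun h => ⟨not_lt.2 h.le, h⟩
  · apply Finset.sum_congr _ (fun _ _ => rfl)
    apply Finset.filter_congr
    intro y _
    constructor
    · rintro ⟨h1, h2⟩; exact le_antisymm (not_lt.1 h1) (not_lt.1 h2)
    · intro h; constructor <;> simp [h]

/-- The intersection-point set `I_d(V)`: points where segments joining a vertex
with positive `d`-coordinate to a vertex with negative `d`-coordinate cross the
hyperplane `{x | x d = 0}`. -/
def interPts {n : ℕ} (d : Fin n) (V : Set (Fin n → ℝ)) : Set (Fin n → ℝ) :=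
  {x | ∃ v ∈ V, ∃ w ∈ V, v d > 0 ∧ w d < 0 ∧
    x = ((-(w d)) / (v d - w d)) • v + ((v d) / (v d - w d)) • w}

/-- Cross-section of a polytope by a coordinate hyperplane. -/
theorem polytope_hyperplane_section {n : ℕ} (V : Set (Fin n → ℝ))
    (hV : V.Finite) (d : Fin n) :
    (convexHull ℝ V) ∩ {x | x d = 0} =
      convexHull ℝ ({v ∈ V | v d = 0} ∪ interPts d V) := by
  classical
  apply Set.Subset.antisymm
  · -- hard direction
    rintro x ⟨hx, hxd⟩
    rw [Set.mem_setOf_eq] at hxd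
    rw [Set.Finite.convexHull_eq hV] at hx
    obtain ⟨c, hc0, hc1, hcx⟩ := hx
    set F := hV.toFinset with hF
    rw [Finset.centerMass_eq_of_sum_1 _ _ hc1] at hcx
    simp only [id_eq] at hcx
    set P := F.filter (fun v => 0 < v d) with hPdef
    set N := F.filter (fun v => v d < 0) with hNdef
    set Z := F.filter (fun v => v d = 0) with hZdef
    have hc0' : ∀ y ∈ F, 0 ≤ c y := fun y hy => hc0 y (hV.mem_toFinset.1 hy)
    have hPmem : ∀ v ∈ P, v ∈ V ∧ 0 < v d := by
      intro v hv; rw [hPdef, Finset.mem_filter] at hv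
      exact ⟨hV.mem_toFinset.1 hv.1, hv.2⟩
    have hNmem : ∀ w ∈ N, w ∈ V ∧ w d < 0 := by
      intro w hw; rw [hNdef, Finset.mem_filter] at hw
      exact ⟨hV.mem_toFinset.1 hw.1, hw.2⟩
    have hZmem : ∀ y ∈ Z, y ∈ V ∧ y d = 0 := by
      intro y hy; rw [hZdef, Finset.mem_filter] at hy
      exact ⟨hV.mem_toFinset.1 hy.1, hy.2⟩
    set S := ∑ v ∈ P, c v * v d with hSdef
    have hsum0 : ∑ y ∈ F, c y * y d = 0 := by
      have := congrFun hcx d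
      rw [Finset.sum_apply] at this
      simp only [Pi.smul_apply, smul_eq_mul] at this
      rw [this, hxd]
    have hZzero : ∑ y ∈ Z, c y * y d = 0 :=
      Finset.sum_eq_zero fun y hy => by rw [(hZmem y hy).2, mul_zero]
    have hSN : ∑ w ∈ N, c w * (-(w d)) = S := by
      have h3 := sum_filter_trichotomy F (fun y => y d) (fun y => c y * y d)
      rw [hsum0, ← hPdef, ← hNdef, ← hZdef, ← hSdef, hZzero, add_zero] at h3
      have : ∑ w ∈ N, c w * (-(w d)) = -∑ w ∈ N, c w * w d := by
        rw [← Finset.sum_neg_distrib]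
        exact Finset.sum_congr rfl fun w _ => by ring
      rw [this]; linarith
    have hS0 : 0 ≤ S :=
      Finset.sum_nonneg fun v hv =>
        mul_nonneg (hc0' v (Finset.filter_subset _ _ hv)) (hPmem v hv).2.le
    rcases hS0.eq_or_lt with hS | hSpos
    · -- S = 0 : all weight on Z
      have hcP : ∀ v ∈ P, c v = 0 := by
        intro v hv
        have := (Finset.sum_eq_zero_iff_of_nonneg fun v hv =>
          mul_nonneg (hc0' v (Finset.filter_subset _ _ hv)) (hPmem v hv).2.le).1 hS.symm v hv
        rcases mul_eq_zero.1 this with h | h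
        · exact h
        · exact absurd h (ne_of_gt (hPmem v hv).2)
      have hcN : ∀ w ∈ N, c w = 0 := by
        intro w hw
        have hnn : ∀ w ∈ N, 0 ≤ c w * (-(w d)) := fun w hw =>
          mul_nonneg (hc0' w (Finset.filter_subset _ _ hw)) (by linarith [(hNmem w hw).2])
        have := (Finset.sum_eq_zero_iff_of_nonneg hnn).1 (hSN.trans hS.symm) w hw
        rcases mul_eq_zero.1 this with h | h
        · exact h
        · exact absurd h (ne_of_lt (by linarith [(hNmem w hw).2]))
      have hZsum1 : ∑ y ∈ Z, c y = 1 := by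
        have h3 := sum_filter_trichotomy F (fun y => y d) c
        rw [hc1, ← hPdef, ← hNdef, ← hZdef,
          Finset.sum_eq_zero hcP, Finset.sum_eq_zero hcN] at h3
        linarith
      have hZx : ∑ y ∈ Z, c y • y = x := by
        have h3 := sum_filter_trichotomy F (fun y => y d) (fun y => c y • y)
        rw [hcx, ← hPdef, ← hNdef, ← hZdef,
          Finset.sum_eq_zero (fun v hv => by rw [hcP v hv, zero_smul]),
          Finset.sum_eq_zero (fun w hw => by rw [hcN w hw, zero_smul]),
          zero_add, zero_add] at h3
        exact h3.symm
      have : x ∈ convexHull ℝ {v ∈ V | v d = 0} := by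
        have := Z.centerMass_mem_convexHull (w := c) (z := id)
          (s := {v ∈ V | v d = 0})
          (fun y hy => hc0' y (Finset.filter_subset _ _ hy))
          (by rw [hZsum1]; exact one_pos)
          (fun y hy => hZmem y hy)
        rw [Finset.centerMass_eq_of_sum_1 _ _ hZsum1] at this
        simp only [id_eq] at this
        rwa [hZx] at this
      exact convexHull_mono Set.subset_union_left this
    · -- S > 0 : main case
      set t := Z.disjSum (P ×ˢ N) with htdef
      set W : (Fin n → ℝ) ⊕ ((Fin n → ℝ) × (Fin n → ℝ)) → ℝ :=
        Sum.elim c (fun p => c p.1 * c p.2 * (p.1 d - p.2 d) / S) with hWdef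
      set z : (Fin n → ℝ) ⊕ ((Fin n → ℝ) × (Fin n → ℝ)) → (Fin n → ℝ) :=
        Sum.elim id (fun p => ((-(p.2 d)) / (p.1 d - p.2 d)) • p.1 +
          ((p.1 d) / (p.1 d - p.2 d)) • p.2) with hzdef
      have hW0 : ∀ i ∈ t, 0 ≤ W i := by
        rintro (y | ⟨v, w⟩) hi
        · rw [htdef, Finset.inl_mem_disjSum] at hi
          exact hc0' y (Finset.filter_subset _ _ hi)
        · rw [htdef, Finset.inr_mem_disjSum, Finset.mem_product] at hi
          have hv := hPmem v hi.1
          have hw := hNmem w hi.2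
          apply div_nonneg _ hSpos.le
          apply mul_nonneg (mul_nonneg (hc0' v (Finset.filter_subset _ _ hi.1))
            (hc0' w (Finset.filter_subset _ _ hi.2)))
          linarith [hv.2, hw.2]
      have hprodsum : ∑ p ∈ P ×ˢ N, W (Sum.inr p) =
          (∑ v ∈ P, c v) + (∑ w ∈ N, c w) := by
        rw [Finset.sum_product]
        have inner : ∀ v ∈ P, ∑ w ∈ N, W (Sum.inr (v, w)) =
            (c v * v d / S) * (∑ w ∈ N, c w) + c v := by
          intro v hv
          have : ∀ w ∈ N, W (Sum.inr (v, w)) =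
              (c v * v d / S) * c w + (c v / S) * (c w * (-(w d))) := by
            intro w hw
            simp only [hWdef, Sum.elim_inr]
            field_simp
            ring
          rw [Finset.sum_congr rfl this, Finset.sum_add_distrib, ← Finset.mul_sum,
            ← Finset.mul_sum, hSN, div_mul_cancel₀]
          exact ne_of_gt hSpos
        rw [Finset.sum_congr rfl inner, Finset.sum_add_distrib, ← Finset.sum_mul]
        have : ∑ v ∈ P, c v * v d / S = 1 := by
          rw [← Finset.sum_div, ← hSdef, div_self (ne_of_gt hSpos)]
        rw [this, one_mul, add_comm]
      have hWsum : ∑ i ∈ t, W i = 1 := by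
        rw [htdef, Finset.sum_disjSum, hprodsum]
        have h3 := sum_filter_trichotomy F (fun y => y d) c
        rw [hc1, ← hPdef, ← hNdef, ← hZdef] at h3
        simp only [hWdef, Sum.elim_inl]
        linarith
      have hz : ∀ i ∈ t, z i ∈ {v ∈ V | v d = 0} ∪ interPts d V := by
        rintro (y | ⟨v, w⟩) hi
        · rw [htdef, Finset.inl_mem_disjSum] at hi
          exact Or.inl (hZmem y hi)
        · rw [htdef, Finset.inr_mem_disjSum, Finset.mem_product] at hi
          have hv := hPmem v hi.1
          have hw := hNmem w hi.2
          exact Or.inr ⟨v, hv.1, w, hw.1, hv.2, hw.2, rfl⟩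
      have hprodvec : ∑ p ∈ P ×ˢ N, W (Sum.inr p) • z (Sum.inr p) =
          (∑ v ∈ P, c v • v) + (∑ w ∈ N, c w • w) := by
        have hterm : ∀ p ∈ P ×ˢ N, W (Sum.inr p) • z (Sum.inr p) =
            ((c p.1 / S) * (c p.2 * (-(p.2 d)))) • p.1 +
            ((c p.1 * p.1 d / S) * c p.2) • p.2 := by
          rintro ⟨v, w⟩ hi
          rw [Finset.mem_product] at hi
          have hv := hPmem v hi.1
          have hw := hNmem w hi.2
          have hne : v d - w d ≠ 0 := by linarith [hv.2, hw.2]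
          simp only [hWdef, hzdef, Sum.elim_inr, smul_add, smul_smul]
          congr 1
          · congr 1
            field_simp
          · congr 1
            field_simp
        rw [Finset.sum_congr rfl hterm, Finset.sum_add_distrib]
        congr 1
        · rw [Finset.sum_product]
          apply Finset.sum_congr rfl
          intro v hv
          dsimp only
          rw [← Finset.sum_smul, ← Finset.mul_sum, hSN, div_mul_cancel₀]
          exact ne_of_gt hSpos
        · rw [Finset.sum_product_right]
          apply Finset.sum_congr rfl
          intro w hw
          dsimp only
          rw [← Finset.sum_smul, ← Finset.sum_mul, ← Finset.sum_div, ← hSdef,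
            div_self (ne_of_gt hSpos), one_mul]
      have hcm : ∑ i ∈ t, W i • z i = x := by
        rw [htdef, Finset.sum_disjSum, hprodvec]
        have h3 := sum_filter_trichotomy F (fun y => y d) (fun y => c y • y)
        rw [hcx, ← hPdef, ← hNdef, ← hZdef] at h3
        simp only [hWdef, hzdef, Sum.elim_inl, id_eq]
        rw [h3]
        abel
      have := t.centerMass_mem_convexHull (w := W) (z := z) hW0
        (by rw [hWsum]; exact one_pos) hz
      rwa [Finset.centerMass_eq_of_sum_1 _ _ hWsum, hcm] at this
  · -- easy direction
    apply convexHull_min _ ((convex_convexHull ℝ V).inter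
      (convex_hyperplane (f := fun w => w d) ⟨fun _ _ => rfl, fun _ _ => rfl⟩ 0))
    rintro y (⟨hyV, hyd⟩ | ⟨v, hv, w, hw, hvd, hwd, rfl⟩)
    · exact ⟨subset_convexHull ℝ V hyV, hyd⟩
    · have hne : (0:ℝ) < v d - w d := by linarith
      have ha : 0 ≤ (-(w d)) / (v d - w d) := div_nonneg (by linarith) hne.le
      have hb : 0 ≤ (v d) / (v d - w d) := div_nonneg hvd.le hne.le
      have hab : (-(w d)) / (v d - w d) + (v d) / (v d - w d) = 1 := by
        rw [← add_div]
        rw [div_eq_one_iff_eq (ne_of_gt hne)]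
        ring
      constructor
      · exact (convex_convexHull ℝ V) (subset_convexHull ℝ V hv)
          (subset_convexHull ℝ V hw) ha hb hab
      · show (((-(w d)) / (v d - w d)) • v + ((v d) / (v d - w d)) • w) d = 0
        simp only [Pi.add_apply, Pi.smul_apply, smul_eq_mul]
        field_simp
        ring
end

section
/- Vertex description of the top part P_d^+: for every finite set V ⊆ (Fin n → ℝ) and every index d : Fin n, (convexHull ℝ V) ∩ {x | 0 ≤ x d} = convexHull ℝ ({v ∈ V | 0 ≤ v d} ∪ I_d(V)). -/
/-- Vertex description of the top part `P_d^+`. -/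
theorem polytope_top_part_vertices {n : ℕ} (V : Set (Fin n → ℝ))
    (hV : V.Finite) (d : Fin n) :
    (convexHull ℝ V) ∩ {x | 0 ≤ x d} =
      convexHull ℝ ({v ∈ V | 0 ≤ v d} ∪ interPts d V) := by
  classical
  apply Set.Subset.antisymm
  · rintro x ⟨hxV, hxd⟩
    rw [← hV.coe_toFinset, Finset.convexHull_eq] at hxV
    obtain ⟨c, hc0, hc1, hcx⟩ := hxV
    rw [Finset.centerMass_eq_of_sum_1 _ _ hc1] at hcx
    simp only [id] at hcx
    set Vf := hV.toFinset with hVfdef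
    set A0 := Vf.filter (fun v => 0 ≤ v d) with hA0def
    set P := Vf.filter (fun v => 0 < v d) with hPdef
    set B := Vf.filter (fun v => v d < 0) with hBdef
    have hVmem : ∀ {v}, v ∈ Vf → v ∈ V := fun h => hV.mem_toFinset.mp h
    have hA0mem : ∀ {v}, v ∈ A0 → v ∈ Vf ∧ 0 ≤ v d := fun h => Finset.mem_filter.mp h
    have hPmem : ∀ {v}, v ∈ P → v ∈ Vf ∧ 0 < v d := fun h => Finset.mem_filter.mp h
    have hBmem : ∀ {v}, v ∈ B → v ∈ Vf ∧ v d < 0 := fun h => Finset.mem_filter.mp h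
    have hUnion : A0 ∪ B = Vf := by
      ext v
      simp only [hA0def, hBdef, Finset.mem_union, Finset.mem_filter]
      constructor
      · rintro (⟨h, _⟩ | ⟨h, _⟩) <;> exact h
      · intro h
        rcases le_or_gt 0 (v d) with h' | h'
        · exact Or.inl ⟨h, h'⟩
        · exact Or.inr ⟨h, h'⟩
    have hDisj : Disjoint A0 B := by
      rw [Finset.disjoint_left]
      intro v hv hv'
      exact absurd (hA0mem hv).2 (not_le.mpr (hBmem hv').2)
    have hPA0 : A0.filter (fun v => 0 < v d) = P := by
      rw [hA0def, hPdef, Finset.filter_filter]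
      apply Finset.filter_congr
      intro v _
      constructor
      · exact fun h => h.2
      · exact fun h => ⟨le_of_lt h, h⟩
    have hPsub : P ⊆ A0 := by
      rw [← hPA0]; exact Finset.filter_subset _ _
    set S := ∑ v ∈ P, c v * v d with hSdef
    set T := ∑ w ∈ B, c w * (-(w d)) with hTdef
    have hS0 : 0 ≤ S := Finset.sum_nonneg fun v hv =>
      mul_nonneg (hc0 v (hPmem hv).1) (le_of_lt (hPmem hv).2)
    have hT0 : 0 ≤ T := Finset.sum_nonneg fun w hw =>
      mul_nonneg (hc0 w (hBmem hw).1) (by linarith [(hBmem hw).2])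
    -- split sums over Vf
    have hsplit : ∀ {M : Type} [inst : AddCommMonoid M] (f : (Fin n → ℝ) → M),
        ∑ v ∈ Vf, f v = ∑ v ∈ A0, f v + ∑ v ∈ B, f v := by
      intro M _ f
      rw [← hUnion, Finset.sum_union hDisj]
    have hA0P : ∑ v ∈ A0, c v * v d = S := by
      rw [hSdef]
      apply (Finset.sum_subset hPsub ?_).symm
      intro v hv hv'
      have h1 := (hA0mem hv).2
      have h2 : ¬ (0 < v d) := by
        intro h
        exact hv' (by rw [← hPA0]; exact Finset.mem_filter.mpr ⟨hv, h⟩)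
      have : v d = 0 := le_antisymm (not_lt.mp h2) h1
      rw [this, mul_zero]
    have hxdval : x d = S - T := by
      have h := congrFun hcx d
      rw [Finset.sum_apply] at h
      simp only [Pi.smul_apply, smul_eq_mul] at h
      rw [hsplit (fun v => c v * v d), hA0P] at h
      have hB' : ∑ w ∈ B, c w * w d = -T := by
        rw [hTdef, ← Finset.sum_neg_distrib]
        apply Finset.sum_congr rfl
        intro w _
        ring
      rw [hB'] at h
      linarith [h]
    have hTS : T ≤ S := by
      have : (0:ℝ) ≤ x d := hxd
      linarith [hxdval]
    by_cases hT : T = 0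
    · -- all negative-vertex weights vanish
      have hcB : ∀ w ∈ B, c w = 0 := by
        intro w hw
        have hnn : ∀ w' ∈ B, 0 ≤ c w' * -(w' d) := fun w' hw' =>
          mul_nonneg (hc0 w' (hBmem hw').1) (by linarith [(hBmem hw').2])
        have h := (Finset.sum_eq_zero_iff_of_nonneg hnn).mp hT w hw
        have hne : -(w d) ≠ 0 := by
          have := (hBmem hw).2
          intro h'
          linarith
        exact (mul_eq_zero.mp h).resolve_right hne
      have hsumA0 : ∑ v ∈ A0, c v = 1 := by
        rw [hsplit (fun v => c v)] at hc1
        rw [Finset.sum_eq_zero hcB] at hc1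
        linarith [hc1]
      have hB0 : ∑ w ∈ B, c w • w = 0 :=
        Finset.sum_eq_zero fun w hw => by rw [hcB w hw, zero_smul]
      have hxA0 : ∑ v ∈ A0, c v • v = x := by
        rw [hsplit (fun v => c v • v), hB0, add_zero] at hcx
        exact hcx
      have hmem := A0.centerMass_mem_convexHull (w := c) (z := id)
        (s := {v ∈ V | 0 ≤ v d} ∪ interPts d V)
        (fun v hv => hc0 v (hA0mem hv).1) (by rw [hsumA0]; norm_num)
        (fun v hv => Or.inl ⟨hVmem (hA0mem hv).1, (hA0mem hv).2⟩)
      rw [Finset.centerMass_eq_of_sum_1 _ _ hsumA0] at hmem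
      simp only [id] at hmem
      rwa [hxA0] at hmem
    · have hTpos : 0 < T := lt_of_le_of_ne hT0 (Ne.symm hT)
      have hSpos : 0 < S := lt_of_lt_of_le hTpos hTS
      have hSne : S ≠ 0 := ne_of_gt hSpos
      have hDne : ∀ q ∈ P ×ˢ B, q.1 d - q.2 d ≠ 0 := by
        intro q hq
        have h1 := (hPmem (Finset.mem_product.mp hq).1).2
        have h2 := (hBmem (Finset.mem_product.mp hq).2).2
        intro h
        have : q.1 d = q.2 d := by linarith
        linarith
      set t : Finset ((Fin n → ℝ) ⊕ ((Fin n → ℝ) × (Fin n → ℝ))) := A0.disjSum (P ×ˢ B) with htdef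
      set W : ((Fin n → ℝ) ⊕ ((Fin n → ℝ) × (Fin n → ℝ))) → ℝ :=
        Sum.elim (fun v => if 0 < v d then c v * (1 - T / S) else c v)
          (fun q => c q.1 * c q.2 * (q.1 d - q.2 d) / S) with hWdef
      set z : ((Fin n → ℝ) ⊕ ((Fin n → ℝ) × (Fin n → ℝ))) → (Fin n → ℝ) :=
        Sum.elim id (fun q => ((-(q.2 d)) / (q.1 d - q.2 d)) • q.1
          + ((q.1 d) / (q.1 d - q.2 d)) • q.2) with hzdef
      have key : ∀ u : (Fin n → ℝ) → ℝ,
          (∑ v ∈ A0, (if 0 < v d then c v * (1 - T / S) else c v) * u v)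
            + ∑ q ∈ P ×ˢ B, c q.1 * c q.2 * (q.1 d - q.2 d) / S *
                ((-(q.2 d)) / (q.1 d - q.2 d) * u q.1 + (q.1 d) / (q.1 d - q.2 d) * u q.2)
            = ∑ v ∈ Vf, c v * u v := by
        intro u
        have e1 : ∑ q ∈ P ×ˢ B, c q.1 * c q.2 * (q.1 d - q.2 d) / S *
                ((-(q.2 d)) / (q.1 d - q.2 d) * u q.1 + (q.1 d) / (q.1 d - q.2 d) * u q.2)
            = ∑ q ∈ P ×ˢ B, ((c q.1 * u q.1 / S) * (c q.2 * (-(q.2 d)))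
                + (c q.2 * u q.2 / S) * (c q.1 * q.1 d)) := by
          apply Finset.sum_congr rfl
          intro q hq
          have hD := hDne q hq
          field_simp
        rw [e1, Finset.sum_add_distrib]
        have e2 : ∑ q ∈ P ×ˢ B, (c q.1 * u q.1 / S) * (c q.2 * (-(q.2 d)))
            = ∑ v ∈ P, (c v * u v / S) * T := by
          rw [Finset.sum_product]
          apply Finset.sum_congr rfl
          intro v _
          dsimp only
          rw [← Finset.mul_sum, ← hTdef]
        have e3 : ∑ q ∈ P ×ˢ B, (c q.2 * u q.2 / S) * (c q.1 * q.1 d)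
            = ∑ w ∈ B, c w * u w := by
          rw [Finset.sum_product_right]
          apply Finset.sum_congr rfl
          intro w _
          dsimp only
          rw [← Finset.mul_sum, ← hSdef, div_mul_cancel₀ _ hSne]
        have e4 : ∑ v ∈ A0, (if 0 < v d then c v * (1 - T / S) else c v) * u v
            = ∑ v ∈ A0, c v * u v - ∑ v ∈ P, (c v * u v / S) * T := by
          have hterm : ∀ v ∈ A0, (if 0 < v d then c v * (1 - T / S) else c v) * u v
              = c v * u v - (if 0 < v d then c v * u v / S * T else 0) := by
            intro v _
            by_cases h : 0 < v d
            · rw [if_pos h, if_pos h]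
              field_simp
            · rw [if_neg h, if_neg h]
              ring
          rw [Finset.sum_congr rfl hterm, Finset.sum_sub_distrib, ← Finset.sum_filter, hPA0]
        rw [e2, e3, e4, hsplit (fun v => c v * u v)]
        ring
      have hW0 : ∀ i ∈ t, 0 ≤ W i := by
        intro i hi
        rw [htdef, Finset.mem_disjSum] at hi
        rcases hi with ⟨v, hv, rfl⟩ | ⟨q, hq, rfl⟩
        · simp only [hWdef, Sum.elim_inl]
          split_ifs
          · apply mul_nonneg (hc0 v (hA0mem hv).1)
            rw [sub_nonneg]
            exact div_le_one_of_le₀ hTS hS0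
          · exact hc0 v (hA0mem hv).1
        · obtain ⟨hq1, hq2⟩ := Finset.mem_product.mp hq
          simp only [hWdef, Sum.elim_inr]
          apply div_nonneg _ hS0
          apply mul_nonneg (mul_nonneg (hc0 _ (hPmem hq1).1) (hc0 _ (hBmem hq2).1))
          have h1 := (hPmem hq1).2
          have h2 := (hBmem hq2).2
          linarith
      have hzmem : ∀ i ∈ t, z i ∈ ({v ∈ V | 0 ≤ v d} ∪ interPts d V) := by
        intro i hi
        rw [htdef, Finset.mem_disjSum] at hi
        rcases hi with ⟨v, hv, rfl⟩ | ⟨q, hq, rfl⟩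
        · exact Or.inl ⟨hVmem (hA0mem hv).1, (hA0mem hv).2⟩
        · obtain ⟨hq1, hq2⟩ := Finset.mem_product.mp hq
          exact Or.inr ⟨q.1, hVmem (hPmem hq1).1, q.2, hVmem (hBmem hq2).1,
            (hPmem hq1).2, (hBmem hq2).2, rfl⟩
      have hWsum : ∑ i ∈ t, W i = 1 := by
        rw [htdef, Finset.sum_disjSum]
        have h1 := key (fun _ => 1)
        simp only [mul_one] at h1
        rw [hc1] at h1
        rw [← h1]
        congr 1
        apply Finset.sum_congr rfl
        intro q hq
        have hD := hDne q hq
        simp only [hWdef, Sum.elim_inr]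
        field_simp
        ring
      have hxsum : ∑ i ∈ t, W i • z i = x := by
        funext j
        have hxj := congrFun hcx j
        rw [Finset.sum_apply] at hxj
        simp only [Pi.smul_apply, smul_eq_mul] at hxj
        rw [Finset.sum_apply]
        simp only [Pi.smul_apply, smul_eq_mul]
        rw [htdef, Finset.sum_disjSum]
        have h1 := key (fun v => v j)
        rw [hxj] at h1
        rw [← h1]
        congr 1
      have hmem := t.centerMass_mem_convexHull hW0 (by rw [hWsum]; norm_num) hzmem
      rw [Finset.centerMass_eq_of_sum_1 _ _ hWsum, hxsum] at hmem
      exact hmem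
  · apply convexHull_min
    · rintro y (⟨hyV, hyd⟩ | ⟨v, hv, w, hw, hvd, hwd, rfl⟩)
      · exact ⟨subset_convexHull ℝ V hyV, hyd⟩
      · have h1 : (0:ℝ) < v d - w d := by linarith
        constructor
        · exact (convex_convexHull ℝ V) (subset_convexHull ℝ V hv) (subset_convexHull ℝ V hw)
            (div_nonneg (by linarith) h1.le) (div_nonneg (by linarith) h1.le) (by field_simp; ring)
        · show (0:ℝ) ≤ _
          simp only [Pi.add_apply, Pi.smul_apply, smul_eq_mul]
          rw [div_mul_eq_mul_div, div_mul_eq_mul_div, ← add_div]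
          rw [show -w d * v d + v d * w d = 0 by ring, zero_div]
    · exact (convex_convexHull ℝ V).inter
        (convex_halfSpace_ge (LinearMap.isLinear (LinearMap.proj d : ((Fin n → ℝ) →ₗ[ℝ] ℝ))) 0)
end

section
/- Vertex description of the bottom part P_d^-: for every finite set V ⊆ (Fin n → ℝ) and every index d : Fin n, Proj_d '' ((convexHull ℝ V) ∩ {x | x d ≤ 0}) = convexHull ℝ ({Proj_d v | v ∈ V, v d ≤ 0} ∪ I_d(V)). -/
/-- The coordinate projection onto the hyperplane `{x | x d = 0}`. -/
def projD {n : ℕ} (d : Fin n) (x : Fin n → ℝ) : Fin n → ℝ :=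
  Function.update x d 0

lemma interPts_coord {n : ℕ} (d : Fin n) {v w : Fin n → ℝ}
    (hv : 0 < v d) (hw : w d ≤ 0) :
    (((-(w d)) / (v d - w d)) • v + ((v d) / (v d - w d)) • w) d = 0 := by
  have hne : v d - w d ≠ 0 := ne_of_gt (by linarith)
  simp only [Pi.add_apply, Pi.smul_apply, smul_eq_mul]
  field_simp
  ring

/-- `projD` as a linear map. -/
def projL {n : ℕ} (d : Fin n) : (Fin n → ℝ) →ₗ[ℝ] (Fin n → ℝ) where
  toFun x := Function.update x d 0
  map_add' x y := by
    funext i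
    by_cases h : i = d <;> simp [Function.update_apply, h]
  map_smul' c x := by
    funext i
    by_cases h : i = d <;> simp [Function.update_apply, h]

open Finset in
lemma keyB {n : ℕ} (d : Fin n) (s : Finset (Fin n → ℝ)) {x : Fin n → ℝ}
    (hx : x ∈ convexHull ℝ (s : Set (Fin n → ℝ))) (hxd : x d ≤ 0) :
    x ∈ convexHull ℝ ({v : Fin n → ℝ | v ∈ (s : Set (Fin n → ℝ)) ∧ v d ≤ 0}
      ∪ interPts d (s : Set (Fin n → ℝ))) := by
  classical
  rw [Finset.convexHull_eq] at hx
  obtain ⟨a, ha0, ha1, hax⟩ := hx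
  rw [Finset.centerMass_eq_of_sum_1 _ _ ha1] at hax
  simp only [id] at hax
  set Pos := s.filter (fun v => 0 < v d) with hPosDef
  set Neg := s.filter (fun v => ¬ 0 < v d) with hNegDef
  have hPosmem : ∀ v ∈ Pos, v ∈ s ∧ 0 < v d := fun v hv => Finset.mem_filter.1 hv
  have hNegmem : ∀ w ∈ Neg, w ∈ s ∧ w d ≤ 0 := fun w hw => by
    have h := Finset.mem_filter.1 hw; exact ⟨h.1, not_lt.1 h.2⟩
  have hsplit_sum : ∀ (f : (Fin n → ℝ) → ℝ),
      ∑ y ∈ s, f y = ∑ y ∈ Pos, f y + ∑ y ∈ Neg, f y :=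
    fun f => (Finset.sum_filter_add_sum_filter_not s _ f).symm
  have hsplit_vec : ∀ (f : (Fin n → ℝ) → (Fin n → ℝ)),
      ∑ y ∈ s, f y = ∑ y ∈ Pos, f y + ∑ y ∈ Neg, f y :=
    fun f => (Finset.sum_filter_add_sum_filter_not s _ f).symm
  set S := ∑ v ∈ Pos, a v * v d with hSdef
  set N := ∑ w ∈ Neg, a w * (-(w d)) with hNdef
  set A := ∑ v ∈ Pos, a v with hAdef
  set B := ∑ w ∈ Neg, a w with hBdef
  have hAB : A + B = 1 := by rw [hAdef, hBdef, ← hsplit_sum]; exact ha1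
  have hS0 : 0 ≤ S := Finset.sum_nonneg fun v hv =>
    mul_nonneg (ha0 v (hPosmem v hv).1) (le_of_lt (hPosmem v hv).2)
  have hN0 : 0 ≤ N := Finset.sum_nonneg fun w hw =>
    mul_nonneg (ha0 w (hNegmem w hw).1) (by linarith [(hNegmem w hw).2])
  have hxd2 : x d = ∑ y ∈ s, a y * (y d) := by
    rw [← hax, Finset.sum_apply]
    simp
  have hSN : S ≤ N := by
    have hN' : ∑ w ∈ Neg, a w * (w d) = -N := by
      rw [hNdef, ← Finset.sum_neg_distrib]
      exact Finset.sum_congr rfl fun w _ => by ring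
    have := hxd2
    rw [hsplit_sum (fun y => a y * y d), hN'] at this
    rw [← hSdef] at this
    linarith
  rcases eq_or_lt_of_le hS0 with hSzero | hSpos
  · -- S = 0 : all positive-coordinate weights vanish
    have hzero : ∀ v ∈ Pos, a v = 0 := by
      intro v hv
      have h := (Finset.sum_eq_zero_iff_of_nonneg (fun v hv =>
        mul_nonneg (ha0 v (hPosmem v hv).1) (le_of_lt (hPosmem v hv).2))).1 hSzero.symm v hv
      have hvd := (hPosmem v hv).2
      have : a v * v d = 0 := h
      rcases mul_eq_zero.1 this with h' | h'
      · exact h'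
      · exact absurd h' (ne_of_gt hvd)
    have hxeq : x = ∑ w ∈ Neg, a w • w := by
      rw [← hax, hsplit_vec (fun y => a y • y)]
      have : ∑ v ∈ Pos, a v • v = 0 :=
        Finset.sum_eq_zero fun v hv => by rw [hzero v hv, zero_smul]
      rw [this, zero_add]
    have hsum1 : ∑ w ∈ Neg, a w = 1 := by
      have : ∑ v ∈ Pos, a v = 0 := Finset.sum_eq_zero hzero
      rw [hsplit_sum a, this, zero_add] at ha1
      exact ha1
    have hmem : x ∈ convexHull ℝ {v : Fin n → ℝ | v ∈ (s : Set (Fin n → ℝ)) ∧ v d ≤ 0} := by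
      have hcm : ∑ w ∈ Neg, a w • w = Neg.centerMass a id := by
        rw [Finset.centerMass_eq_of_sum_1 _ _ hsum1]
        simp only [id_eq]
      rw [hxeq, hcm]
      exact Finset.centerMass_mem_convexHull Neg (fun w hw => ha0 w (hNegmem w hw).1)
        (hsum1 ▸ one_pos) (fun w hw => hNegmem w hw)
    exact convexHull_mono Set.subset_union_left hmem
  · -- 0 < S : pair positive and negative vertices
    have hNpos : 0 < N := lt_of_lt_of_le hSpos hSN
    have hNne : N ≠ 0 := ne_of_gt hNpos
    set W : ((Fin n → ℝ) × (Fin n → ℝ)) ⊕ (Fin n → ℝ) → ℝ :=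
      Sum.elim (fun q => a q.1 * a q.2 * (q.1 d - q.2 d) / N) (fun w => a w * (1 - S / N))
      with hWdef
    set Z : ((Fin n → ℝ) × (Fin n → ℝ)) ⊕ (Fin n → ℝ) → (Fin n → ℝ) :=
      Sum.elim (fun q => ((-(q.2 d)) / (q.1 d - q.2 d)) • q.1 +
        ((q.1 d) / (q.1 d - q.2 d)) • q.2) id with hZdef
    set t : Finset (((Fin n → ℝ) × (Fin n → ℝ)) ⊕ (Fin n → ℝ)) := (Pos ×ˢ Neg).disjSum Neg
      with htdef
    have hW0 : ∀ i ∈ t, 0 ≤ W i := by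
      rintro (⟨v, w⟩ | w) hi
      · have hvw := Finset.mem_product.1 (Finset.inl_mem_disjSum.1 hi)
        have h1 := hPosmem _ hvw.1
        have h2 := hNegmem _ hvw.2
        apply div_nonneg _ (le_of_lt hNpos)
        apply mul_nonneg (mul_nonneg (ha0 _ h1.1) (ha0 _ h2.1))
        simp only
        linarith [h1.2, h2.2]
      · have hw := hNegmem _ (Finset.inr_mem_disjSum.1 hi)
        apply mul_nonneg (ha0 _ hw.1)
        have : S / N ≤ 1 := (div_le_one hNpos).2 hSN
        linarith
    have hW1 : ∑ i ∈ t, W i = 1 := by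
      rw [htdef, Finset.sum_disjSum]
      have hfst : ∑ q ∈ Pos ×ˢ Neg, W (Sum.inl q) = (S * B + A * N) / N := by
        rw [Finset.sum_product]
        have hinner : ∀ v ∈ Pos, ∑ w ∈ Neg, W (Sum.inl (v, w))
            = (a v * v d * B + a v * N) / N := by
          intro v hv
          have : ∑ w ∈ Neg, a v * a w * (v d - w d)
              = a v * v d * B + a v * N := by
            rw [hBdef, hNdef, Finset.mul_sum, Finset.mul_sum, ← Finset.sum_add_distrib]
            exact Finset.sum_congr rfl fun w _ => by ring
          simp only [hWdef, Sum.elim_inl]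
          rw [← Finset.sum_div, this]
        rw [Finset.sum_congr rfl hinner, ← Finset.sum_div]
        congr 1
        rw [Finset.sum_add_distrib, ← Finset.sum_mul, ← Finset.sum_mul]
      have hsnd : ∑ w ∈ Neg, W (Sum.inr w) = B * (1 - S / N) := by
        simp only [hWdef, Sum.elim_inr]
        rw [← Finset.sum_mul]
      rw [hfst, hsnd]
      have : (S * B + A * N) / N + B * (1 - S / N) = A + B := by
        field_simp
        ring
      rw [this, hAB]
    have hZmem : ∀ i ∈ t, Z i ∈ ({v : Fin n → ℝ | v ∈ (s : Set (Fin n → ℝ)) ∧ v d ≤ 0}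
        ∪ interPts d (s : Set (Fin n → ℝ))) := by
      rintro (⟨v, w⟩ | w) hi
      · have hvw := Finset.mem_product.1 (Finset.inl_mem_disjSum.1 hi)
        have h1 := hPosmem _ hvw.1
        have h2 := hNegmem _ hvw.2
        rcases lt_or_eq_of_le h2.2 with hwd | hwd
        · exact Or.inr ⟨v, h1.1, w, h2.1, h1.2, hwd, rfl⟩
        · refine Or.inl ?_
          have hZw : Z (Sum.inl (v, w)) = w := by
            show ((-(w d)) / (v d - w d)) • v + ((v d) / (v d - w d)) • w = w
            have hwd' : w d = 0 := hwd
            rw [hwd', neg_zero, zero_div, zero_smul, zero_add, sub_zero,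
              div_self (ne_of_gt h1.2), one_smul]
          rw [hZw]
          exact ⟨h2.1, h2.2⟩
      · have hw := hNegmem _ (Finset.inr_mem_disjSum.1 hi)
        exact Or.inl ⟨hw.1, hw.2⟩
    have hZsum : ∑ i ∈ t, W i • Z i = x := by
      rw [htdef, Finset.sum_disjSum]
      have hterm : ∀ q ∈ Pos ×ˢ Neg, W (Sum.inl q) • Z (Sum.inl q)
          = (a q.1 * a q.2 * (-(q.2 d)) / N) • q.1 + (a q.1 * a q.2 * (q.1 d) / N) • q.2 := by
        rintro ⟨v, w⟩ hq
        have hvw := Finset.mem_product.1 hq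
        have h1 := hPosmem _ hvw.1
        have h2 := hNegmem _ hvw.2
        have hne : v d - w d ≠ 0 := ne_of_gt (by linarith [h1.2, h2.2])
        simp only [hWdef, hZdef, Sum.elim_inl]
        rw [smul_add, smul_smul, smul_smul]
        congr 1
        · congr 1
          field_simp
        · congr 1
          field_simp
      rw [Finset.sum_congr rfl hterm]
      have hsplit2 : ∑ q ∈ Pos ×ˢ Neg,
          ((a q.1 * a q.2 * (-(q.2 d)) / N) • q.1 + (a q.1 * a q.2 * (q.1 d) / N) • q.2)
          = (∑ v ∈ Pos, a v • v) + ∑ w ∈ Neg, (a w * (S / N)) • w := by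
        rw [Finset.sum_add_distrib]
        congr 1
        · rw [Finset.sum_product]
          refine Finset.sum_congr rfl fun v hv => ?_
          rw [← Finset.sum_smul]
          congr 1
          have : ∑ w ∈ Neg, a v * a w * (-(w d)) / N = (a v * N) / N := by
            rw [← Finset.sum_div]
            congr 1
            rw [hNdef, Finset.mul_sum]
            exact Finset.sum_congr rfl fun w _ => by ring
          rw [this, mul_div_assoc, div_self hNne, mul_one]
        · rw [Finset.sum_product_right]
          refine Finset.sum_congr rfl fun w hw => ?_
          rw [← Finset.sum_smul]
          congr 1
          have : ∑ v ∈ Pos, a v * a w * (v d) / N = (S * a w) / N := by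
            rw [← Finset.sum_div]
            congr 1
            rw [hSdef, Finset.sum_mul]
            exact Finset.sum_congr rfl fun v _ => by ring
          rw [this]
          ring
      rw [hsplit2]
      have hsnd : ∑ w ∈ Neg, W (Sum.inr w) • Z (Sum.inr w)
          = ∑ w ∈ Neg, (a w * (1 - S / N)) • w := by
        simp [hWdef, hZdef]
      rw [hsnd, add_assoc, ← Finset.sum_add_distrib]
      have : ∑ w ∈ Neg, ((a w * (S / N)) • w + (a w * (1 - S / N)) • w)
          = ∑ w ∈ Neg, a w • w := by
        refine Finset.sum_congr rfl fun w hw => ?_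
        rw [← add_smul]
        congr 1
        field_simp
        ring
      rw [this, ← hsplit_vec (fun y => a y • y), hax]
    rw [← hZsum, ← Finset.centerMass_eq_of_sum_1 t Z hW1]
    exact Finset.centerMass_mem_convexHull t hW0 (hW1 ▸ one_pos) hZmem

lemma keyA {n : ℕ} (d : Fin n) (V : Set (Fin n → ℝ)) :
    convexHull ℝ ({v : Fin n → ℝ | v ∈ V ∧ v d ≤ 0} ∪ interPts d V)
      ⊆ convexHull ℝ V ∩ {x | x d ≤ 0} := by
  apply convexHull_min
  · rintro p (⟨hpV, hpd⟩ | ⟨v, hv, w, hw, hvd, hwd, rfl⟩)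
    · exact ⟨subset_convexHull ℝ V hpV, hpd⟩
    · have hne : v d - w d ≠ 0 := ne_of_gt (by linarith)
      constructor
      · refine (convex_convexHull ℝ V) (subset_convexHull ℝ V hv) (subset_convexHull ℝ V hw)
          ?_ ?_ ?_
        · exact div_nonneg (by linarith) (by linarith)
        · exact div_nonneg (by linarith) (by linarith)
        · rw [← add_div]
          field_simp
          ring
      · have := interPts_coord d hvd (le_of_lt hwd)
        simpa using this.le
  · exact (convex_convexHull ℝ V).inter
      (convex_halfSpace_le ⟨fun x y => rfl, fun c x => rfl⟩ 0)

lemma bottom_eq {n : ℕ} (d : Fin n) (V : Set (Fin n → ℝ)) (hV : V.Finite) :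
    convexHull ℝ V ∩ {x | x d ≤ 0}
      = convexHull ℝ ({v : Fin n → ℝ | v ∈ V ∧ v d ≤ 0} ∪ interPts d V) := by
  apply Set.Subset.antisymm
  · rintro x ⟨hx1, hx2⟩
    have h := keyB d hV.toFinset (x := x) (by rwa [hV.coe_toFinset]) hx2
    rwa [hV.coe_toFinset] at h
  · exact keyA d V

/-- Vertex description of the bottom part `P_d^-`. -/
theorem polytope_bottom_part_vertices {n : ℕ} (V : Set (Fin n → ℝ))
    (hV : V.Finite) (d : Fin n) :
    projD d '' ((convexHull ℝ V) ∩ {x | x d ≤ 0}) =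
      convexHull ℝ ({y | ∃ v ∈ V, v d ≤ 0 ∧ y = projD d v} ∪ interPts d V) := by
  rw [bottom_eq d V hV]
  have himg : projD d '' convexHull ℝ ({v : Fin n → ℝ | v ∈ V ∧ v d ≤ 0} ∪ interPts d V)
      = convexHull ℝ (projD d '' ({v : Fin n → ℝ | v ∈ V ∧ v d ≤ 0} ∪ interPts d V)) :=
    (projL d).image_convexHull _
  rw [himg, Set.image_union]
  congr 2
  · ext y
    simp only [Set.mem_image, Set.mem_setOf_eq]
    constructor
    · rintro ⟨v, ⟨hv, hvd⟩, rfl⟩; exact ⟨v, hv, hvd, rfl⟩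
    · rintro ⟨v, hv, hvd, rfl⟩; exact ⟨v, ⟨hv, hvd⟩, rfl⟩
  · ext z
    have hfix : ∀ p ∈ interPts d V, projD d p = p := by
      rintro p ⟨v, hv, w, hw, hvd, hwd, rfl⟩
      have hpd := interPts_coord d hvd (le_of_lt hwd)
      show Function.update _ d 0 = _
      rw [← hpd, Function.update_eq_self]
    constructor
    · rintro ⟨p, hp, rfl⟩
      rwa [hfix p hp]
    · intro hz
      exact ⟨z, hz, hfix z hz⟩
end

section
/- A coordinate ReLU image of a polytope consists of at most two polytopes: for every finite set V ⊆ (Fin n → ℝ) and every index d : Fin n, the image of convexHull ℝ V under r_d equals convexHull ℝ ({v ∈ V | 0 ≤ v d} ∪ I_d(V)) ∪ convexHull ℝ ({Proj_d v | v ∈ V, v d ≤ 0} ∪ I_d(V)). -/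
/-- The coordinate ReLU map acting only on dimension `d`. -/
noncomputable def reluD {n : ℕ} (d : Fin n) (x : Fin n → ℝ) : Fin n → ℝ :=
  Function.update x d (max (x d) 0)

lemma interPts_coord_s10 {n : ℕ} {d : Fin n} {V : Set (Fin n → ℝ)} {p : Fin n → ℝ}
    (hp : p ∈ interPts d V) : p d = 0 := by
  obtain ⟨v, hv, w, hw, hvd, hwd, rfl⟩ := hp
  have h : v d - w d ≠ 0 := ne_of_gt (by linarith)
  simp only [Pi.add_apply, Pi.smul_apply, smul_eq_mul]
  field_simp
  ring

lemma interPts_subset_hull {n : ℕ} {d : Fin n} {V : Set (Fin n → ℝ)} :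
    interPts d V ⊆ convexHull ℝ V := by
  rintro p ⟨v, hv, w, hw, hvd, hwd, rfl⟩
  have hD : (0:ℝ) < v d - w d := by linarith
  exact (convex_convexHull ℝ V) (subset_convexHull ℝ V hv) (subset_convexHull ℝ V hw)
    (div_nonneg (by linarith) hD.le) (div_nonneg (by linarith) hD.le)
    (by rw [← add_div, div_eq_one_iff_eq (ne_of_gt hD)]; ring)

open Finset in
lemma mem_hull_nonneg {n : ℕ} {d : Fin n} {V : Set (Fin n → ℝ)} {x : Fin n → ℝ}
    (hx : x ∈ convexHull ℝ V) (hxd : 0 ≤ x d) :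
    x ∈ convexHull ℝ ({v ∈ V | 0 ≤ v d} ∪ interPts d V) := by
  classical
  rw [_root_.convexHull_eq] at hx
  obtain ⟨ι, t, w, z, hw0, hw1, hzV, hcm⟩ := hx
  rw [Finset.centerMass_eq_of_sum_1 _ _ hw1] at hcm
  set P : Finset ι := t.filter (fun i => 0 < z i d) with hPdef
  set N : Finset ι := t.filter (fun i => z i d < 0) with hNdef
  set Z : Finset ι := t.filter (fun i => 0 ≤ z i d) with hZdef
  have hP_mem : ∀ i ∈ P, i ∈ t ∧ 0 < z i d := fun i hi => Finset.mem_filter.1 hi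
  have hN_mem : ∀ j ∈ N, j ∈ t ∧ z j d < 0 := fun j hj => Finset.mem_filter.1 hj
  have hZ_mem : ∀ i ∈ Z, i ∈ t ∧ 0 ≤ z i d := fun i hi => Finset.mem_filter.1 hi
  set A : ℝ := ∑ i ∈ P, w i * z i d with hAdef
  set B : ℝ := ∑ j ∈ N, w j * (-(z j d)) with hBdef
  have hA0 : 0 ≤ A := Finset.sum_nonneg fun i hi =>
    mul_nonneg (hw0 i (hP_mem i hi).1) (hP_mem i hi).2.le
  have hB0 : 0 ≤ B := Finset.sum_nonneg fun j hj =>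
    mul_nonneg (hw0 j (hN_mem j hj).1) (neg_nonneg.2 (hN_mem j hj).2.le)
  have hNZ : t.filter (fun i => ¬ 0 ≤ z i d) = N := by
    rw [hNdef]; apply Finset.filter_congr; intro i _; simp [not_le]
  have hZP : Z.filter (fun i => 0 < z i d) = P := by
    rw [hZdef, Finset.filter_filter, hPdef]
    apply Finset.filter_congr; intro i _
    constructor
    · exact fun h => h.2
    · exact fun h => ⟨h.le, h⟩
  have hsplitS : ∀ g : ι → ℝ, ∑ i ∈ Z, g i + ∑ j ∈ N, g j = ∑ i ∈ t, g i := by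
    intro g
    have h := Finset.sum_filter_add_sum_filter_not t (fun i => 0 ≤ z i d) g
    rwa [hNZ] at h
  have hsplitV : ∀ g : ι → (Fin n → ℝ), ∑ i ∈ Z, g i + ∑ j ∈ N, g j = ∑ i ∈ t, g i := by
    intro g
    have h := Finset.sum_filter_add_sum_filter_not t (fun i => 0 ≤ z i d) g
    rwa [hNZ] at h
  have hZA : ∑ i ∈ Z, w i * z i d = A := by
    have h1 := Finset.sum_filter_add_sum_filter_not Z (fun i => 0 < z i d) (fun i => w i * z i d)
    rw [hZP] at h1
    have h2 : ∑ i ∈ Z.filter (fun i => ¬ 0 < z i d), w i * z i d = 0 :=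
      Finset.sum_eq_zero fun i hi => by
        have h3 := Finset.mem_filter.1 hi
        have h4 : z i d = 0 := le_antisymm (not_lt.1 h3.2) (hZ_mem i h3.1).2
        rw [h4, mul_zero]
    rw [h2, add_zero] at h1
    rw [← h1, ← hAdef]
  have hNB : ∑ j ∈ N, w j * z j d = -B := by
    rw [hBdef]
    simp [mul_neg]
  have hxdAB : A - B = x d := by
    have h1 : x d = ∑ i ∈ t, w i * z i d := by
      rw [← hcm, Finset.sum_apply]
      simp [smul_eq_mul]
    have h2 := hsplitS (fun i => w i * z i d)
    simp only [hZA, hNB] at h2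
    rw [h1, ← h2]
    ring
  rcases eq_or_lt_of_le hB0 with hBz | hBpos
  · -- B = 0 : all negative-coordinate weights vanish
    have hNw : ∀ j ∈ N, w j = 0 := by
      intro j hj
      have h0 : ∀ k ∈ N, 0 ≤ w k * (-(z k d)) := fun k hk =>
        mul_nonneg (hw0 k (hN_mem k hk).1) (neg_nonneg.2 (hN_mem k hk).2.le)
      have hsum0 : ∑ j ∈ N, w j * (-(z j d)) = 0 := by rw [← hBdef]; exact hBz.symm
      have h1 := (Finset.sum_eq_zero_iff_of_nonneg h0).1 hsum0 j hj
      have h2 : -(z j d) ≠ 0 := ne_of_gt (neg_pos.2 (hN_mem j hj).2)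
      exact (mul_eq_zero.1 h1).resolve_right h2
    have hZ1 : ∑ i ∈ Z, w i = 1 := by
      have h1 := hsplitS w
      have h2 : ∑ j ∈ N, w j = 0 := Finset.sum_eq_zero hNw
      rw [h2, add_zero, hw1] at h1; exact h1
    have hxZ : ∑ i ∈ Z, w i • z i = x := by
      have h1 := hsplitV (fun i => w i • z i)
      have h2 : ∑ j ∈ N, w j • z j = 0 :=
        Finset.sum_eq_zero fun j hj => by rw [hNw j hj, zero_smul]
      rw [h2, add_zero, hcm] at h1; exact h1
    have hmem := Finset.centerMass_mem_convexHull (R := ℝ)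
      (s := {v ∈ V | 0 ≤ v d} ∪ interPts d V) Z
      (fun i hi => hw0 i (hZ_mem i hi).1)
      (by rw [hZ1]; exact one_pos)
      (fun i hi => Or.inl ⟨hzV i (hZ_mem i hi).1, (hZ_mem i hi).2⟩)
    rwa [Finset.centerMass_eq_of_sum_1 _ _ hZ1, hxZ] at hmem
  · -- B > 0, hence A > 0
    have hApos : 0 < A := by linarith
    have hprodmem : ∀ p ∈ P ×ˢ N, (p.1 ∈ t ∧ 0 < z p.1 d) ∧ (p.2 ∈ t ∧ z p.2 d < 0) := by
      intro p hp
      have h := Finset.mem_product.1 hp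
      exact ⟨hP_mem _ h.1, hN_mem _ h.2⟩
    have hD : ∀ p ∈ P ×ˢ N, z p.1 d - z p.2 d ≠ 0 := fun p hp =>
      ne_of_gt (by have h := hprodmem p hp; linarith [h.1.2, h.2.2])
    -- scalar sums
    have key1 : ∑ i ∈ Z, (if 0 < z i d then w i * (A - B) else w i * A) =
        A * ∑ i ∈ Z, w i - B * ∑ i ∈ P, w i := by
      have h1 : ∀ i ∈ Z, (if 0 < z i d then w i * (A - B) else w i * A) =
          A * w i - (if 0 < z i d then B * w i else 0) := by
        intro i _; split_ifs <;> ring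
      rw [Finset.sum_congr rfl h1, Finset.sum_sub_distrib, ← Finset.mul_sum]
      congr 1
      rw [← Finset.sum_filter, hZP, ← Finset.mul_sum]
    have key2 : ∑ p ∈ P ×ˢ N, w p.1 * w p.2 * (z p.1 d - z p.2 d) =
        A * ∑ j ∈ N, w j + B * ∑ i ∈ P, w i := by
      have h1 : ∀ p ∈ P ×ˢ N, w p.1 * w p.2 * (z p.1 d - z p.2 d) =
          (w p.1 * z p.1 d) * w p.2 + (w p.2 * (-(z p.2 d))) * w p.1 := by
        intro p _; ring
      rw [Finset.sum_congr rfl h1, Finset.sum_add_distrib]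
      congr 1
      · rw [Finset.sum_product]
        simp_rw [← Finset.mul_sum]
        rw [← Finset.sum_mul]
      · rw [Finset.sum_product_right]
        simp_rw [← Finset.mul_sum]
        rw [← Finset.sum_mul, mul_comm]
    -- vector sums
    have key1v : ∑ i ∈ Z, (if 0 < z i d then w i * (A - B) else w i * A) • z i =
        A • (∑ i ∈ Z, w i • z i) - B • (∑ i ∈ P, w i • z i) := by
      have h1 : ∀ i ∈ Z, (if 0 < z i d then w i * (A - B) else w i * A) • z i =
          A • (w i • z i) - (if 0 < z i d then B • (w i • z i) else 0) := by
        intro i _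
        split_ifs with h
        · rw [smul_smul, smul_smul, ← sub_smul]; congr 1; ring
        · rw [smul_smul, sub_zero]; congr 1; ring
      rw [Finset.sum_congr rfl h1, Finset.sum_sub_distrib, ← Finset.smul_sum]
      congr 1
      rw [← Finset.sum_filter, hZP, ← Finset.smul_sum]
    have key2v : ∑ p ∈ P ×ˢ N, (w p.1 * w p.2 * (z p.1 d - z p.2 d)) •
          (((-(z p.2 d)) / (z p.1 d - z p.2 d)) • z p.1 +
           ((z p.1 d) / (z p.1 d - z p.2 d)) • z p.2) =
        B • (∑ i ∈ P, w i • z i) + A • (∑ j ∈ N, w j • z j) := by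
      have h1 : ∀ p ∈ P ×ˢ N, (w p.1 * w p.2 * (z p.1 d - z p.2 d)) •
          (((-(z p.2 d)) / (z p.1 d - z p.2 d)) • z p.1 +
           ((z p.1 d) / (z p.1 d - z p.2 d)) • z p.2) =
          (w p.1 * w p.2 * (-(z p.2 d))) • z p.1 + (w p.1 * w p.2 * z p.1 d) • z p.2 := by
        intro p hp
        have hDp := hD p hp
        rw [smul_add, smul_smul, smul_smul]
        congr 1
        · congr 1; field_simp
        · congr 1; field_simp
      rw [Finset.sum_congr rfl h1, Finset.sum_add_distrib]
      congr 1
      · rw [Finset.sum_product]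
        have h2 : ∀ i ∈ P, ∑ j ∈ N, (w i * w j * (-(z j d))) • z i = B • (w i • z i) := by
          intro i _
          rw [← Finset.sum_smul, smul_smul]
          congr 1
          have h3 : ∀ j ∈ N, w i * w j * (-(z j d)) = (w j * (-(z j d))) * w i := by
            intro j _; ring
          rw [Finset.sum_congr rfl h3, ← Finset.sum_mul, ← hBdef]
        rw [Finset.sum_congr rfl h2, ← Finset.smul_sum]
      · rw [Finset.sum_product_right]
        have h2 : ∀ j ∈ N, ∑ i ∈ P, (w i * w j * z i d) • z j = A • (w j • z j) := by
          intro j _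
          rw [← Finset.sum_smul, smul_smul]
          congr 1
          have h3 : ∀ i ∈ P, w i * w j * z i d = (w i * z i d) * w j := by
            intro i _; ring
          rw [Finset.sum_congr rfl h3, ← Finset.sum_mul, ← hAdef]
        rw [Finset.sum_congr rfl h2, ← Finset.smul_sum]
    -- assemble the center of mass
    set Wt : ι ⊕ ι × ι → ℝ :=
      Sum.elim (fun i => if 0 < z i d then w i * (A - B) else w i * A)
        (fun p => w p.1 * w p.2 * (z p.1 d - z p.2 d)) with hWtdef
    set Pt : ι ⊕ ι × ι → (Fin n → ℝ) :=
      Sum.elim z (fun p => ((-(z p.2 d)) / (z p.1 d - z p.2 d)) • z p.1 +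
        ((z p.1 d) / (z p.1 d - z p.2 d)) • z p.2) with hPtdef
    have hWsum : ∑ k ∈ Z.disjSum (P ×ˢ N), Wt k = A := by
      rw [hWtdef, Finset.sum_disjSum]
      simp only [Sum.elim_inl, Sum.elim_inr]
      rw [key1, key2]
      have hs := hsplitS w
      rw [hw1] at hs
      linear_combination A * hs
    have hVsum : ∑ k ∈ Z.disjSum (P ×ˢ N), Wt k • Pt k = A • x := by
      rw [hWtdef, hPtdef, Finset.sum_disjSum]
      simp only [Sum.elim_inl, Sum.elim_inr]
      rw [key1v, key2v]
      have hs := hsplitV (fun i => w i • z i)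
      rw [hcm] at hs
      rw [← hs, smul_add]
      abel
    have hWnn : ∀ k ∈ Z.disjSum (P ×ˢ N), 0 ≤ Wt k := by
      rintro (i | p) hk
      · have hiZ : i ∈ Z := Finset.inl_mem_disjSum.1 hk
        simp only [hWtdef, Sum.elim_inl]
        split_ifs
        · exact mul_nonneg (hw0 i (hZ_mem i hiZ).1) (by linarith)
        · exact mul_nonneg (hw0 i (hZ_mem i hiZ).1) hA0
      · have hpP : p ∈ P ×ˢ N := Finset.inr_mem_disjSum.1 hk
        have h := hprodmem p hpP
        simp only [hWtdef, Sum.elim_inr]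
        exact mul_nonneg (mul_nonneg (hw0 _ h.1.1) (hw0 _ h.2.1)) (by linarith [h.1.2, h.2.2])
    have hPts : ∀ k ∈ Z.disjSum (P ×ˢ N), Pt k ∈ {v ∈ V | 0 ≤ v d} ∪ interPts d V := by
      rintro (i | p) hk
      · have hiZ : i ∈ Z := Finset.inl_mem_disjSum.1 hk
        exact Or.inl ⟨hzV i (hZ_mem i hiZ).1, (hZ_mem i hiZ).2⟩
      · have hpP : p ∈ P ×ˢ N := Finset.inr_mem_disjSum.1 hk
        have h := hprodmem p hpP
        exact Or.inr ⟨z p.1, hzV _ h.1.1, z p.2, hzV _ h.2.1, h.1.2, h.2.2, rfl⟩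
    have hmem := Finset.centerMass_mem_convexHull (R := ℝ)
      (s := {v ∈ V | 0 ≤ v d} ∪ interPts d V) (Z.disjSum (P ×ˢ N))
      hWnn (by rw [hWsum]; exact hApos) hPts
    have hcmx : (Z.disjSum (P ×ˢ N)).centerMass Wt Pt = x := by
      rw [Finset.centerMass, hWsum, hVsum, inv_smul_smul₀ (ne_of_gt hApos)]
    rwa [hcmx] at hmem

open Finset in
lemma mem_hull_nonpos {n : ℕ} {d : Fin n} {V : Set (Fin n → ℝ)} {x : Fin n → ℝ}
    (hx : x ∈ convexHull ℝ V) (hxd : x d ≤ 0) :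
    x ∈ convexHull ℝ ({v ∈ V | v d ≤ 0} ∪ interPts d V) := by
  classical
  rw [_root_.convexHull_eq] at hx
  obtain ⟨ι, t, w, z, hw0, hw1, hzV, hcm⟩ := hx
  rw [Finset.centerMass_eq_of_sum_1 _ _ hw1] at hcm
  set P : Finset ι := t.filter (fun i => 0 < z i d) with hPdef
  set N : Finset ι := t.filter (fun i => z i d < 0) with hNdef
  set Z : Finset ι := t.filter (fun i => z i d ≤ 0) with hZdef
  have hP_mem : ∀ i ∈ P, i ∈ t ∧ 0 < z i d := fun i hi => Finset.mem_filter.1 hi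
  have hN_mem : ∀ j ∈ N, j ∈ t ∧ z j d < 0 := fun j hj => Finset.mem_filter.1 hj
  have hZ_mem : ∀ i ∈ Z, i ∈ t ∧ z i d ≤ 0 := fun i hi => Finset.mem_filter.1 hi
  set A : ℝ := ∑ i ∈ P, w i * z i d with hAdef
  set B : ℝ := ∑ j ∈ N, w j * (-(z j d)) with hBdef
  have hA0 : 0 ≤ A := Finset.sum_nonneg fun i hi =>
    mul_nonneg (hw0 i (hP_mem i hi).1) (hP_mem i hi).2.le
  have hB0 : 0 ≤ B := Finset.sum_nonneg fun j hj =>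
    mul_nonneg (hw0 j (hN_mem j hj).1) (neg_nonneg.2 (hN_mem j hj).2.le)
  have hNZ : t.filter (fun i => ¬ z i d ≤ 0) = P := by
    rw [hPdef]; apply Finset.filter_congr; intro i _; simp [not_le]
  have hZP : Z.filter (fun i => z i d < 0) = N := by
    rw [hZdef, Finset.filter_filter, hNdef]
    apply Finset.filter_congr; intro i _
    constructor
    · exact fun h => h.2
    · exact fun h => ⟨h.le, h⟩
  have hsplitS : ∀ g : ι → ℝ, ∑ i ∈ Z, g i + ∑ j ∈ P, g j = ∑ i ∈ t, g i := by
    intro g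
    have h := Finset.sum_filter_add_sum_filter_not t (fun i => z i d ≤ 0) g
    rwa [hNZ] at h
  have hsplitV : ∀ g : ι → (Fin n → ℝ), ∑ i ∈ Z, g i + ∑ j ∈ P, g j = ∑ i ∈ t, g i := by
    intro g
    have h := Finset.sum_filter_add_sum_filter_not t (fun i => z i d ≤ 0) g
    rwa [hNZ] at h
  have hZB : ∑ i ∈ Z, w i * (-(z i d)) = B := by
    have h1 := Finset.sum_filter_add_sum_filter_not Z (fun i => z i d < 0)
      (fun i => w i * (-(z i d)))
    rw [hZP] at h1
    have h2 : ∑ i ∈ Z.filter (fun i => ¬ z i d < 0), w i * (-(z i d)) = 0 :=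
      Finset.sum_eq_zero fun i hi => by
        have h3 := Finset.mem_filter.1 hi
        have h4 : z i d = 0 := le_antisymm (hZ_mem i h3.1).2 (not_lt.1 h3.2)
        rw [h4]; ring
    rw [h2, add_zero] at h1
    rw [← h1, ← hBdef]
  have hxdAB : A - B = x d := by
    have h1 : x d = ∑ i ∈ t, w i * z i d := by
      rw [← hcm, Finset.sum_apply]
      simp [smul_eq_mul]
    have h2 := hsplitS (fun i => w i * z i d)
    have hZA : ∑ i ∈ Z, w i * z i d = -B := by
      have : ∀ i ∈ Z, w i * z i d = -(w i * (-(z i d))) := by intro i _; ring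
      rw [Finset.sum_congr rfl this, Finset.sum_neg_distrib, hZB]
    simp only [hZA, ← hAdef] at h2
    rw [h1, ← h2]
    ring
  rcases eq_or_lt_of_le hA0 with hAz | hApos
  · -- A = 0 : all positive-coordinate weights vanish
    have hPw : ∀ j ∈ P, w j = 0 := by
      intro j hj
      have h0 : ∀ k ∈ P, 0 ≤ w k * z k d := fun k hk =>
        mul_nonneg (hw0 k (hP_mem k hk).1) (hP_mem k hk).2.le
      have hsum0 : ∑ i ∈ P, w i * z i d = 0 := by rw [← hAdef]; exact hAz.symm
      have h1 := (Finset.sum_eq_zero_iff_of_nonneg h0).1 hsum0 j hj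
      have h2 : z j d ≠ 0 := ne_of_gt (hP_mem j hj).2
      exact (mul_eq_zero.1 h1).resolve_right h2
    have hZ1 : ∑ i ∈ Z, w i = 1 := by
      have h1 := hsplitS w
      have h2 : ∑ j ∈ P, w j = 0 := Finset.sum_eq_zero hPw
      rw [h2, add_zero, hw1] at h1; exact h1
    have hxZ : ∑ i ∈ Z, w i • z i = x := by
      have h1 := hsplitV (fun i => w i • z i)
      have h2 : ∑ j ∈ P, w j • z j = 0 :=
        Finset.sum_eq_zero fun j hj => by rw [hPw j hj, zero_smul]
      rw [h2, add_zero, hcm] at h1; exact h1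
    have hmem := Finset.centerMass_mem_convexHull (R := ℝ)
      (s := {v ∈ V | v d ≤ 0} ∪ interPts d V) Z
      (fun i hi => hw0 i (hZ_mem i hi).1)
      (by rw [hZ1]; exact one_pos)
      (fun i hi => Or.inl ⟨hzV i (hZ_mem i hi).1, (hZ_mem i hi).2⟩)
    rwa [Finset.centerMass_eq_of_sum_1 _ _ hZ1, hxZ] at hmem
  · -- A > 0, hence B > 0
    have hBpos : 0 < B := by linarith
    have hprodmem : ∀ p ∈ P ×ˢ N, (p.1 ∈ t ∧ 0 < z p.1 d) ∧ (p.2 ∈ t ∧ z p.2 d < 0) := by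
      intro p hp
      have h := Finset.mem_product.1 hp
      exact ⟨hP_mem _ h.1, hN_mem _ h.2⟩
    have hD : ∀ p ∈ P ×ˢ N, z p.1 d - z p.2 d ≠ 0 := fun p hp =>
      ne_of_gt (by have h := hprodmem p hp; linarith [h.1.2, h.2.2])
    have key1 : ∑ i ∈ Z, (if z i d < 0 then w i * (B - A) else w i * B) =
        B * ∑ i ∈ Z, w i - A * ∑ j ∈ N, w j := by
      have h1 : ∀ i ∈ Z, (if z i d < 0 then w i * (B - A) else w i * B) =
          B * w i - (if z i d < 0 then A * w i else 0) := by
        intro i _; split_ifs <;> ring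
      rw [Finset.sum_congr rfl h1, Finset.sum_sub_distrib, ← Finset.mul_sum]
      congr 1
      rw [← Finset.sum_filter, hZP, ← Finset.mul_sum]
    have key2 : ∑ p ∈ P ×ˢ N, w p.1 * w p.2 * (z p.1 d - z p.2 d) =
        A * ∑ j ∈ N, w j + B * ∑ i ∈ P, w i := by
      have h1 : ∀ p ∈ P ×ˢ N, w p.1 * w p.2 * (z p.1 d - z p.2 d) =
          (w p.1 * z p.1 d) * w p.2 + (w p.2 * (-(z p.2 d))) * w p.1 := by
        intro p _; ring
      rw [Finset.sum_congr rfl h1, Finset.sum_add_distrib]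
      congr 1
      · rw [Finset.sum_product]
        simp_rw [← Finset.mul_sum]
        rw [← Finset.sum_mul]
      · rw [Finset.sum_product_right]
        simp_rw [← Finset.mul_sum]
        rw [← Finset.sum_mul, mul_comm]
    have key1v : ∑ i ∈ Z, (if z i d < 0 then w i * (B - A) else w i * B) • z i =
        B • (∑ i ∈ Z, w i • z i) - A • (∑ j ∈ N, w j • z j) := by
      have h1 : ∀ i ∈ Z, (if z i d < 0 then w i * (B - A) else w i * B) • z i =
          B • (w i • z i) - (if z i d < 0 then A • (w i • z i) else 0) := by
        intro i _
        split_ifs with h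
        · rw [smul_smul, smul_smul, ← sub_smul]; congr 1; ring
        · rw [smul_smul, sub_zero]; congr 1; ring
      rw [Finset.sum_congr rfl h1, Finset.sum_sub_distrib, ← Finset.smul_sum]
      congr 1
      rw [← Finset.sum_filter, hZP, ← Finset.smul_sum]
    have key2v : ∑ p ∈ P ×ˢ N, (w p.1 * w p.2 * (z p.1 d - z p.2 d)) •
          (((-(z p.2 d)) / (z p.1 d - z p.2 d)) • z p.1 +
           ((z p.1 d) / (z p.1 d - z p.2 d)) • z p.2) =
        B • (∑ i ∈ P, w i • z i) + A • (∑ j ∈ N, w j • z j) := by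
      have h1 : ∀ p ∈ P ×ˢ N, (w p.1 * w p.2 * (z p.1 d - z p.2 d)) •
          (((-(z p.2 d)) / (z p.1 d - z p.2 d)) • z p.1 +
           ((z p.1 d) / (z p.1 d - z p.2 d)) • z p.2) =
          (w p.1 * w p.2 * (-(z p.2 d))) • z p.1 + (w p.1 * w p.2 * z p.1 d) • z p.2 := by
        intro p hp
        have hDp := hD p hp
        rw [smul_add, smul_smul, smul_smul]
        congr 1
        · congr 1; field_simp
        · congr 1; field_simp
      rw [Finset.sum_congr rfl h1, Finset.sum_add_distrib]
      congr 1
      · rw [Finset.sum_product]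
        have h2 : ∀ i ∈ P, ∑ j ∈ N, (w i * w j * (-(z j d))) • z i = B • (w i • z i) := by
          intro i _
          rw [← Finset.sum_smul, smul_smul]
          congr 1
          have h3 : ∀ j ∈ N, w i * w j * (-(z j d)) = (w j * (-(z j d))) * w i := by
            intro j _; ring
          rw [Finset.sum_congr rfl h3, ← Finset.sum_mul, ← hBdef]
        rw [Finset.sum_congr rfl h2, ← Finset.smul_sum]
      · rw [Finset.sum_product_right]
        have h2 : ∀ j ∈ N, ∑ i ∈ P, (w i * w j * z i d) • z j = A • (w j • z j) := by
          intro j _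
          rw [← Finset.sum_smul, smul_smul]
          congr 1
          have h3 : ∀ i ∈ P, w i * w j * z i d = (w i * z i d) * w j := by
            intro i _; ring
          rw [Finset.sum_congr rfl h3, ← Finset.sum_mul, ← hAdef]
        rw [Finset.sum_congr rfl h2, ← Finset.smul_sum]
    set Wt : ι ⊕ ι × ι → ℝ :=
      Sum.elim (fun i => if z i d < 0 then w i * (B - A) else w i * B)
        (fun p => w p.1 * w p.2 * (z p.1 d - z p.2 d)) with hWtdef
    set Pt : ι ⊕ ι × ι → (Fin n → ℝ) :=
      Sum.elim z (fun p => ((-(z p.2 d)) / (z p.1 d - z p.2 d)) • z p.1 +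
        ((z p.1 d) / (z p.1 d - z p.2 d)) • z p.2) with hPtdef
    have hWsum : ∑ k ∈ Z.disjSum (P ×ˢ N), Wt k = B := by
      rw [hWtdef, Finset.sum_disjSum]
      simp only [Sum.elim_inl, Sum.elim_inr]
      rw [key1, key2]
      have hs := hsplitS w
      rw [hw1] at hs
      linear_combination B * hs
    have hVsum : ∑ k ∈ Z.disjSum (P ×ˢ N), Wt k • Pt k = B • x := by
      rw [hWtdef, hPtdef, Finset.sum_disjSum]
      simp only [Sum.elim_inl, Sum.elim_inr]
      rw [key1v, key2v]
      have hs := hsplitV (fun i => w i • z i)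
      rw [hcm] at hs
      rw [← hs, smul_add]
      abel
    have hWnn : ∀ k ∈ Z.disjSum (P ×ˢ N), 0 ≤ Wt k := by
      rintro (i | p) hk
      · have hiZ : i ∈ Z := Finset.inl_mem_disjSum.1 hk
        simp only [hWtdef, Sum.elim_inl]
        split_ifs
        · exact mul_nonneg (hw0 i (hZ_mem i hiZ).1) (by linarith)
        · exact mul_nonneg (hw0 i (hZ_mem i hiZ).1) hB0
      · have hpP : p ∈ P ×ˢ N := Finset.inr_mem_disjSum.1 hk
        have h := hprodmem p hpP
        simp only [hWtdef, Sum.elim_inr]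
        exact mul_nonneg (mul_nonneg (hw0 _ h.1.1) (hw0 _ h.2.1)) (by linarith [h.1.2, h.2.2])
    have hPts : ∀ k ∈ Z.disjSum (P ×ˢ N), Pt k ∈ {v ∈ V | v d ≤ 0} ∪ interPts d V := by
      rintro (i | p) hk
      · have hiZ : i ∈ Z := Finset.inl_mem_disjSum.1 hk
        exact Or.inl ⟨hzV i (hZ_mem i hiZ).1, (hZ_mem i hiZ).2⟩
      · have hpP : p ∈ P ×ˢ N := Finset.inr_mem_disjSum.1 hk
        have h := hprodmem p hpP
        exact Or.inr ⟨z p.1, hzV _ h.1.1, z p.2, hzV _ h.2.1, h.1.2, h.2.2, rfl⟩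
    have hmem := Finset.centerMass_mem_convexHull (R := ℝ)
      (s := {v ∈ V | v d ≤ 0} ∪ interPts d V) (Z.disjSum (P ×ˢ N))
      hWnn (by rw [hWsum]; exact hBpos) hPts
    have hcmx : (Z.disjSum (P ×ˢ N)).centerMass Wt Pt = x := by
      rw [Finset.centerMass, hWsum, hVsum, inv_smul_smul₀ (ne_of_gt hBpos)]
    rwa [hcmx] at hmem

lemma projD_isLinear {n : ℕ} (d : Fin n) : IsLinearMap ℝ (projD d) := by
  constructor
  · intro x y
    funext i
    simp only [projD, Function.update_apply, Pi.add_apply]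
    split_ifs <;> simp
  · intro c x
    funext i
    simp only [projD, Function.update_apply, Pi.smul_apply, smul_eq_mul]
    split_ifs <;> simp

lemma projD_fix {n : ℕ} {d : Fin n} {p : Fin n → ℝ} (hp : p d = 0) : projD d p = p := by
  rw [projD, ← hp]
  exact Function.update_eq_self d p

/-- A coordinate ReLU image of a polytope consists of at most two polytopes. -/
theorem reluD_image_polytope {n : ℕ} (V : Set (Fin n → ℝ))
    (hV : V.Finite) (d : Fin n) :
    reluD d '' (convexHull ℝ V) =
      convexHull ℝ ({v ∈ V | 0 ≤ v d} ∪ interPts d V) ∪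
      convexHull ℝ ({y | ∃ v ∈ V, v d ≤ 0 ∧ y = projD d v} ∪ interPts d V) := by
  have hrelu_pos : ∀ x : Fin n → ℝ, 0 ≤ x d → reluD d x = x := by
    intro x h
    rw [reluD, max_eq_left h]
    exact Function.update_eq_self d x
  have hrelu_neg : ∀ x : Fin n → ℝ, x d ≤ 0 → reluD d x = projD d x := by
    intro x h
    rw [reluD, projD, max_eq_right h]
  have hsetEq : {y | ∃ v ∈ V, v d ≤ 0 ∧ y = projD d v} ∪ interPts d V =
      projD d '' ({v ∈ V | v d ≤ 0} ∪ interPts d V) := by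
    rw [Set.image_union]
    congr 1
    · ext y
      simp only [Set.mem_setOf_eq, Set.mem_image]
      constructor
      · rintro ⟨v, hv, hvd, rfl⟩; exact ⟨v, ⟨hv, hvd⟩, rfl⟩
      · rintro ⟨v, ⟨hv, hvd⟩, rfl⟩; exact ⟨v, hv, hvd, rfl⟩
    · apply Set.Subset.antisymm
      · intro p hp
        exact ⟨p, hp, projD_fix (interPts_coord_s10 hp)⟩
      · rintro _ ⟨p, hp, rfl⟩
        rwa [projD_fix (interPts_coord_s10 hp)]
  have hhull2 : convexHull ℝ ({y | ∃ v ∈ V, v d ≤ 0 ∧ y = projD d v} ∪ interPts d V) =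
      projD d '' convexHull ℝ ({v ∈ V | v d ≤ 0} ∪ interPts d V) := by
    rw [hsetEq, (projD_isLinear d).image_convexHull]
  have hposSub : convexHull ℝ ({v ∈ V | 0 ≤ v d} ∪ interPts d V) ⊆ {x | 0 ≤ x d} := by
    apply convexHull_min
    · rintro y (⟨_, hy⟩ | hy)
      · exact hy
      · exact le_of_eq (interPts_coord_s10 hy).symm
    · exact convex_halfSpace_ge ⟨fun a b => rfl, fun c a => rfl⟩ 0
  have hnegSub : convexHull ℝ ({v ∈ V | v d ≤ 0} ∪ interPts d V) ⊆ {x | x d ≤ 0} := by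
    apply convexHull_min
    · rintro y (⟨_, hy⟩ | hy)
      · exact hy
      · exact le_of_eq (interPts_coord_s10 hy)
    · exact convex_halfSpace_le ⟨fun a b => rfl, fun c a => rfl⟩ 0
  have hposHull : convexHull ℝ ({v ∈ V | 0 ≤ v d} ∪ interPts d V) ⊆ convexHull ℝ V := by
    apply convexHull_min
    · exact Set.union_subset (fun v hv => subset_convexHull ℝ V hv.1) interPts_subset_hull
    · exact convex_convexHull ℝ V
  have hnegHull : convexHull ℝ ({v ∈ V | v d ≤ 0} ∪ interPts d V) ⊆ convexHull ℝ V := by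
    apply convexHull_min
    · exact Set.union_subset (fun v hv => subset_convexHull ℝ V hv.1) interPts_subset_hull
    · exact convex_convexHull ℝ V
  apply Set.Subset.antisymm
  · rintro _ ⟨x, hx, rfl⟩
    rcases le_total 0 (x d) with h | h
    · left
      rw [hrelu_pos x h]
      exact mem_hull_nonneg hx h
    · right
      rw [hrelu_neg x h, hhull2]
      exact ⟨x, mem_hull_nonpos hx h, rfl⟩
  · rintro y (hy | hy)
    · exact ⟨y, hposHull hy, hrelu_pos y (hposSub hy)⟩
    · rw [hhull2] at hy
      obtain ⟨x, hx, rfl⟩ := hy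
      exact ⟨x, hnegHull hx, hrelu_neg x (hnegSub hx)⟩
end

section
/- Soundness of the negative-branch under-approximation (one step of Theorem 1): let V ⊆ (Fin n → ℝ) be finite, d : Fin n, and let T be any subset of (convexHull ℝ V) ∩ {x | x d = 0} (for instance a set of chosen intersection points from I_d(V)). Then convexHull ℝ ({Proj_d v | v ∈ V, v d < 0} ∪ T) ⊆ Proj_d '' ((convexHull ℝ V) ∩ {x | x d ≤ 0}), and hence convexHull ℝ ({Proj_d v | v ∈ V, v d < 0} ∪ T) is contained in the image of convexHull ℝ V under r_d. -/
lemma projD_linear {n : ℕ} (d : Fin n) (a b : ℝ) (x y : Fin n → ℝ) :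
    projD d (a • x + b • y) = a • projD d x + b • projD d y := by
  funext i
  by_cases h : i = d
  · subst h; simp [projD]
  · simp [projD, Function.update_apply, h]

/-- Soundness of the negative-branch under-approximation. -/
theorem negative_branch_sound {n : ℕ} (V : Set (Fin n → ℝ))
    (hV : V.Finite) (d : Fin n) (T : Set (Fin n → ℝ))
    (hT : T ⊆ (convexHull ℝ V) ∩ {x | x d = 0}) :
    convexHull ℝ ({y | ∃ v ∈ V, v d < 0 ∧ y = projD d v} ∪ T) ⊆
      projD d '' ((convexHull ℝ V) ∩ {x | x d ≤ 0}) ∧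
    convexHull ℝ ({y | ∃ v ∈ V, v d < 0 ∧ y = projD d v} ∪ T) ⊆
      reluD d '' (convexHull ℝ V) := by
  have hconvC : Convex ℝ ((convexHull ℝ V) ∩ {x | x d ≤ 0}) :=
    (convex_convexHull ℝ V).inter (convex_halfSpace_le (LinearMap.proj d).isLinear 0)
  have hconvimg : Convex ℝ (projD d '' ((convexHull ℝ V) ∩ {x | x d ≤ 0})) := by
    rintro _ ⟨x, hx, rfl⟩ _ ⟨y, hy, rfl⟩ a b ha hb hab
    exact ⟨a • x + b • y, hconvC hx hy ha hb hab, projD_linear d a b x y⟩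
  have hsub : ({y | ∃ v ∈ V, v d < 0 ∧ y = projD d v} ∪ T) ⊆
      projD d '' ((convexHull ℝ V) ∩ {x | x d ≤ 0}) := by
    rintro y (⟨v, hv, hvd, rfl⟩ | hy)
    · exact ⟨v, ⟨subset_convexHull ℝ V hv, le_of_lt hvd⟩, rfl⟩
    · obtain ⟨hy1, hy2⟩ := hT hy
      refine ⟨y, ⟨hy1, le_of_eq hy2⟩, ?_⟩
      funext i
      by_cases h : i = d
      · subst h; simp only [projD, Function.update_self]; exact (Set.mem_setOf.mp hy2).symm
      · simp [projD, Function.update_apply, h]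
  have h1 : convexHull ℝ ({y | ∃ v ∈ V, v d < 0 ∧ y = projD d v} ∪ T) ⊆
      projD d '' ((convexHull ℝ V) ∩ {x | x d ≤ 0}) :=
    convexHull_min hsub hconvimg
  refine ⟨h1, h1.trans ?_⟩
  rintro _ ⟨x, ⟨hx1, hx2⟩, rfl⟩
  refine ⟨x, hx1, ?_⟩
  have : max (x d) 0 = 0 := max_eq_right hx2
  simp [reluD, projD, this]
end

section
/- Correctness of the complete-top-polytope (CTP) pruning strategy: let V ⊆ (Fin n → ℝ) be finite and d : Fin n, and suppose that for every v ∈ V with v d < 0 the projection Proj_d v belongs to convexHull ℝ V. Then Proj_d '' ((convexHull ℝ V) ∩ {x | x d ≤ 0}) ⊆ (convexHull ℝ V) ∩ {x | 0 ≤ x d}, and consequently the image of convexHull ℝ V under r_d equals (convexHull ℝ V) ∩ {x | 0 ≤ x d}. -/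
lemma projD_key {n : ℕ} (V : Set (Fin n → ℝ)) (d : Fin n)
    (hproj : ∀ v ∈ V, v d < 0 → projD d v ∈ convexHull ℝ V)
    (x : Fin n → ℝ) (hx : x ∈ convexHull ℝ V) (hxd : x d ≤ 0) :
    projD d x ∈ convexHull ℝ V := by
  have hx2 := hx
  rw [convexHull_eq] at hx2
  obtain ⟨ι, t, w, z, hw0, hw1, hz, hcm⟩ := hx2
  have hx_eq : x = ∑ i ∈ t, w i • z i := by
    rw [← hcm, Finset.centerMass, hw1]; simp
  set e : Fin n → ℝ := Pi.single d 1 with he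
  set c : ι → ℝ := fun i => if z i d < 0 then -(z i d) else 0 with hc
  set z' : ι → (Fin n → ℝ) := fun i => z i + c i • e with hz'
  have hz'mem : ∀ i ∈ t, z' i ∈ convexHull ℝ V := by
    intro i hi
    by_cases h : z i d < 0
    · have : z' i = projD d (z i) := by
        funext j
        by_cases hj : j = d
        · subst hj; simp [z', c, e, projD, h]
        · simp [z', c, e, projD, Function.update_of_ne hj, Pi.single_apply, hj, h]
      rw [this]
      exact hproj (z i) (hz i hi) h
    · have : z' i = z i := by simp [z', c, h]
      rw [this]; exact subset_convexHull ℝ V (hz i hi)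
  set q : Fin n → ℝ := ∑ i ∈ t, w i • z' i with hq
  have hqmem : q ∈ convexHull ℝ V :=
    (convex_convexHull ℝ V).sum_mem hw0 hw1 hz'mem
  set T : ℝ := ∑ i ∈ t, w i * c i with hT
  have hT0 : 0 ≤ T := Finset.sum_nonneg fun i hi => by
    have := hw0 i hi
    have : 0 ≤ c i := by by_cases h : z i d < 0 <;> simp [c, h] <;> linarith
    positivity
  have hq_eq : q = x + T • e := by
    rw [hq, hx_eq]
    rw [show (∑ i ∈ t, w i • z' i) = ∑ i ∈ t, (w i • z i + (w i * c i) • e) by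
      apply Finset.sum_congr rfl; intro i hi
      rw [hz']; simp [smul_add, smul_smul]]
    rw [Finset.sum_add_distrib, ← Finset.sum_smul]
  have hxd_eq : x d = ∑ i ∈ t, w i * z i d := by
    rw [hx_eq]; simp [Finset.sum_apply]
  have haT : -(x d) ≤ T := by
    rw [hxd_eq, ← Finset.sum_neg_distrib]
    apply Finset.sum_le_sum
    intro i hi
    rw [neg_mul_eq_mul_neg]
    by_cases h : z i d < 0
    · simp [c, h]
    · have h1 : 0 ≤ z i d := le_of_not_gt h
      have : c i = 0 := by simp [c, h]
      rw [this]
      have := hw0 i hi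
      nlinarith
  have hproj_eq : projD d x = x + (-(x d)) • e := by
    funext j
    by_cases hj : j = d
    · subst hj; simp [projD, e]
    · simp [projD, e, Function.update_of_ne hj, Pi.single_apply, hj]
  by_cases hTz : T = 0
  · have : -(x d) = 0 := le_antisymm (hTz ▸ haT) (by linarith)
    rw [hproj_eq, this]; simpa using hx
  · have hTpos : 0 < T := lt_of_le_of_ne hT0 (Ne.symm hTz)
    set l : ℝ := (-(x d)) / T with hl
    have hl0 : 0 ≤ l := div_nonneg (by linarith) hT0
    have hl1 : l ≤ 1 := by rw [hl, div_le_one hTpos]; exact haT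
    have : projD d x = (1 - l) • x + l • q := by
      rw [hq_eq, hproj_eq]
      rw [smul_add, smul_smul, ← add_assoc, ← add_smul]
      rw [show (1 - l) + l = 1 by ring, one_smul]
      congr 1
      rw [hl, div_mul_cancel₀]
      exact hTz
    rw [this]
    exact convex_convexHull ℝ V hx hqmem (by linarith) hl0 (by ring)

/-- Correctness of the complete-top-polytope (CTP) pruning strategy. -/
theorem ctp_pruning_correct {n : ℕ} (V : Set (Fin n → ℝ))
    (hV : V.Finite) (d : Fin n)
    (hproj : ∀ v ∈ V, v d < 0 → projD d v ∈ convexHull ℝ V) :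
    projD d '' ((convexHull ℝ V) ∩ {x | x d ≤ 0}) ⊆
      (convexHull ℝ V) ∩ {x | 0 ≤ x d} ∧
    reluD d '' (convexHull ℝ V) = (convexHull ℝ V) ∩ {x | 0 ≤ x d} := by
  constructor
  · rintro y ⟨x, ⟨hx, hxd⟩, rfl⟩
    refine ⟨projD_key V d hproj x hx hxd, ?_⟩
    simp [projD]
  · ext y
    constructor
    · rintro ⟨x, hx, rfl⟩
      by_cases h : 0 ≤ x d
      · have : reluD d x = x := by
          simp [reluD, max_eq_left h]
        rw [this]; exact ⟨hx, h⟩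
      · have hle : x d ≤ 0 := le_of_not_ge h
        have : reluD d x = projD d x := by
          simp [reluD, projD, max_eq_right hle]
        rw [this]
        refine ⟨projD_key V d hproj x hx hle, ?_⟩
        simp [projD]
    · rintro ⟨hy, hyd⟩
      have hyd' : 0 ≤ y d := hyd
      refine ⟨y, hy, ?_⟩
      simp [reluD, max_eq_left hyd']
end
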